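/- arXiv:1703.07102 — 4 statements merged into one kernel-verified Lean document; each statement's English description precedes it below -/
import Mathlib

section
/- Let n ≥ 1 be an integer, let a > 0 be a scaling factor, let α ∈ W(n) be a weak composition of n, and let f : [0,∞) → [0,∞) be a right-continuous, weakly decreasing function with f(x) → 0 as x → ∞. Then sup_{x ≥ 0} |∂̃ᵃ(ord α)(x) − f(x)| ≤ sup_{x ≥ 0} |∂̃ᵃα(x) − f(x)|. -/
open Filter

/-- α is a weak composition of n: a finitely supported sequence of naturals
(indexed from 0, so `α i` is part `i+1`) summing to n. -/
def IsWeakComp (n : ℕ) (α : ℕ →₀ ℕ) : Prop :=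
  ∑ i ∈ α.support, α i = n

/-- `ord α` is the weakly decreasing rearrangement of the parts of α
(indexed from 0, with value 0 beyond the positive parts). -/
def ord (α : ℕ →₀ ℕ) : ℕ → ℕ :=
  fun i => ((α.support.val.map ⇑α).sort (· ≤ ·)).reverse.getD i 0

/-- The rescaled diagram-boundary function `∂̃ᵃα(x) = (a/n)·α_{⌊x·a⌋+1}`
(with 0-indexed parts, so part `⌊x·a⌋+1` is `α ⌊x·a⌋`). -/
noncomputable def rescaledBdry (n : ℕ) (a : ℝ) (α : ℕ → ℕ) (x : ℝ) : ℝ :=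
  (a / (n : ℝ)) * (α ⌊x * a⌋₊ : ℝ)

section Aux

lemma aux_sorted (α : ℕ →₀ ℕ) :
    ((α.support.val.map ⇑α).sort (· ≤ ·)).reverse.Pairwise (· ≥ ·) := by
  have h := Multiset.pairwise_sort (r := (· ≤ ·)) (s := α.support.val.map ⇑α)
  exact List.pairwise_reverse.mpr h

/-- In a list sorted descending, at least `k+1` elements are ≥ the `k`-th. -/
lemma aux_count_ge (L : List ℕ) (hL : L.Pairwise (· ≥ ·)) (k : ℕ) (hk : k < L.length) :
    k + 1 ≤ L.countP (fun x => decide (L.getD k 0 ≤ x)) := by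
  have hsub := (List.take_sublist (k + 1) L).countP_le
      (p := fun x => decide (L.getD k 0 ≤ x))
  have hall : ∀ x ∈ L.take (k + 1), (fun x => decide (L.getD k 0 ≤ x)) x = true := by
    intro x hx
    obtain ⟨i, hi, hix⟩ := List.mem_iff_getElem.mp hx
    have hi' : i < L.length := (List.length_take (i := k+1) (l := L) ▸ hi).trans_le (min_le_right _ _)
    have hik : i ≤ k := by
      have := (List.length_take (i := k+1) (l := L) ▸ hi).trans_le (min_le_left _ _); omega
    have : L.getD k 0 ≤ L[i] := by
      rw [List.getD_eq_getElem L 0 hk]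
      rcases eq_or_lt_of_le hik with h | h
      · subst h; exact le_refl _
      · exact List.pairwise_iff_getElem.mp hL i k hi' hk h
    simp only [decide_eq_true_iff]
    rw [← hix, List.getElem_take]
    exact this
  have hlen : (L.take (k + 1)).length = k + 1 := by
    rw [List.length_take]; omega
  calc k + 1 = (L.take (k+1)).countP (fun x => decide (L.getD k 0 ≤ x)) := by
        rw [List.countP_eq_length.mpr hall, hlen]
    _ ≤ _ := hsub

/-- In a list sorted descending, at most `k` elements are > the `k`-th. -/
lemma aux_count_gt (L : List ℕ) (hL : L.Pairwise (· ≥ ·)) (k : ℕ) :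
    L.countP (fun x => decide (L.getD k 0 < x)) ≤ k := by
  by_cases hk : k < L.length
  · have hsplit := List.take_append_drop k L
    have : L.countP (fun x => decide (L.getD k 0 < x)) =
        (L.take k).countP (fun x => decide (L.getD k 0 < x))
          + (L.drop k).countP (fun x => decide (L.getD k 0 < x)) := by
      have h := List.countP_append (p := fun x => decide (L.getD k 0 < x)) (l₁ := L.take k) (l₂ := L.drop k)
      rw [hsplit] at h
      exact h
    rw [this]
    have h1 : (L.take k).countP (fun x => decide (L.getD k 0 < x)) ≤ k :=
      le_trans List.countP_le_length (by rw [List.length_take]; omega)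
    have h2 : (L.drop k).countP (fun x => decide (L.getD k 0 < x)) = 0 := by
      rw [List.countP_eq_zero]
      intro x hx
      obtain ⟨i, hi, hix⟩ := List.mem_iff_getElem.mp hx
      have hki : k + i < L.length := by
        have := hi; rw [List.length_drop] at this; omega
      have hxval : x = L[k + i] := by rw [← hix, List.getElem_drop]
      have : L[k+i] ≤ L.getD k 0 := by
        rw [List.getD_eq_getElem L 0 hk]
        rcases Nat.eq_zero_or_pos i with h | h
        · subst h; simp
        · exact List.pairwise_iff_getElem.mp hL k (k+i) hk hki (by omega)
      simp only [decide_eq_true_iff, not_lt]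
      rw [hxval]; exact this
    omega
  · exact le_trans List.countP_le_length (by omega)

lemma ord_anti (α : ℕ →₀ ℕ) : Antitone (ord α) := by
  intro i j hij
  set L := ((α.support.val.map ⇑α).sort (· ≤ ·)).reverse with hLdef
  show L.getD j 0 ≤ L.getD i 0
  by_cases hj : j < L.length
  · have hi : i < L.length := lt_of_le_of_lt hij hj
    rw [List.getD_eq_getElem L 0 hj, List.getD_eq_getElem L 0 hi]
    rcases eq_or_lt_of_le hij with h | h
    · subst h; exact le_refl _
    · exact List.pairwise_iff_getElem.mp (aux_sorted α) i j hi hj h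
  · rw [List.getD_eq_default L 0 (by omega)]
    exact Nat.zero_le _

/-- There is an index `j ≥ k` with `α j ≥ ord α k`. -/
lemma exists_ge (α : ℕ →₀ ℕ) (k : ℕ) : ∃ j, k ≤ j ∧ ord α k ≤ α j := by
  by_cases hv : ord α k = 0
  · exact ⟨k, le_refl _, by omega⟩
  set L := ((α.support.val.map ⇑α).sort (· ≤ ·)).reverse with hLdef
  have hk : k < L.length := by
    by_contra h
    exact hv (List.getD_eq_default L 0 (by omega))
  set v := ord α k with hvdef
  have hcount : k + 1 ≤ L.countP (fun x => decide (v ≤ x)) := aux_count_ge L (aux_sorted α) k hk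
  -- translate countP on L to card of a filter on the support
  have hperm : (L : Multiset ℕ) = α.support.val.map ⇑α := by
    rw [hLdef]
    rw [Multiset.coe_reverse]
    exact Multiset.sort_eq _ _
  have hcard : (α.support.filter (fun j => v ≤ α j)).card =
      L.countP (fun x => decide (v ≤ x)) := by
    have := Multiset.countP_map ⇑α α.support.val (fun x => v ≤ x)
    rw [← hperm] at this
    rw [Multiset.coe_countP] at this
    rw [Finset.card_def, Finset.filter_val, ← this]
  rw [← hcard] at hcount
  by_contra hcon
  push_neg at hcon
  have hsub : α.support.filter (fun j => v ≤ α j) ⊆ Finset.range k := by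
    intro j hj
    rw [Finset.mem_range]
    rw [Finset.mem_filter] at hj
    by_contra h
    exact absurd hj.2 (not_le.mpr (hcon j (by omega)))
  have := Finset.card_le_card hsub
  rw [Finset.card_range] at this
  omega

/-- There is an index `j ≤ k` with `α j ≤ ord α k`. -/
lemma exists_le (α : ℕ →₀ ℕ) (k : ℕ) : ∃ j, j ≤ k ∧ α j ≤ ord α k := by
  set L := ((α.support.val.map ⇑α).sort (· ≤ ·)).reverse with hLdef
  set v := ord α k with hvdef
  have hcount : L.countP (fun x => decide (v < x)) ≤ k := aux_count_gt L (aux_sorted α) k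
  have hperm : (L : Multiset ℕ) = α.support.val.map ⇑α := by
    rw [hLdef, Multiset.coe_reverse]
    exact Multiset.sort_eq _ _
  have hcard : (α.support.filter (fun j => v < α j)).card =
      L.countP (fun x => decide (v < x)) := by
    have := Multiset.countP_map ⇑α α.support.val (fun x => v < x)
    rw [← hperm] at this
    rw [Multiset.coe_countP] at this
    rw [Finset.card_def, Finset.filter_val, ← this]
  rw [← hcard] at hcount
  by_contra hcon
  push_neg at hcon
  have hsub : Finset.range (k + 1) ⊆ α.support.filter (fun j => v < α j) := by
    intro j hj
    rw [Finset.mem_range] at hj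
    have h := hcon j (by omega)
    rw [Finset.mem_filter]
    refine ⟨Finsupp.mem_support_iff.mpr (by omega), h⟩
  have := Finset.card_le_card hsub
  rw [Finset.card_range] at this
  omega

end Aux

theorem stmt0 (n : ℕ) (hn : 1 ≤ n) (a : ℝ) (ha : 0 < a)
    (α : ℕ →₀ ℕ) (hα : IsWeakComp n α)
    (f : ℝ → ℝ) (hf0 : ∀ x : ℝ, 0 ≤ x → 0 ≤ f x)
    (hfmono : ∀ x y : ℝ, 0 ≤ x → x ≤ y → f y ≤ f x)
    (hfrc : ∀ x : ℝ, 0 ≤ x → ContinuousWithinAt f (Set.Ici x) x)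
    (hflim : Tendsto f atTop (nhds 0)) :
    (⨆ x : {x : ℝ // 0 ≤ x}, |rescaledBdry n a (ord α) x.1 - f x.1|) ≤
      ⨆ x : {x : ℝ // 0 ≤ x}, |rescaledBdry n a (⇑α) x.1 - f x.1| := by
  have hne : Nonempty {x : ℝ // 0 ≤ x} := ⟨⟨0, le_refl 0⟩⟩
  have hαle : ∀ j, α j ≤ n := by
    intro j
    by_cases hj : j ∈ α.support
    · calc α j ≤ ∑ i ∈ α.support, α i := Finset.single_le_sum (fun i _ => Nat.zero_le _) hj
        _ = n := hα
    · rw [Finsupp.notMem_support_iff.mp hj]; exact Nat.zero_le _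
  have hc0 : (0:ℝ) ≤ a / n := by positivity
  -- boundedness of the RHS family
  have hbdd : BddAbove (Set.range fun x : {x : ℝ // 0 ≤ x} =>
      |rescaledBdry n a (⇑α) x.1 - f x.1|) := by
    refine ⟨a + f 0, ?_⟩
    rintro y ⟨⟨x, hx⟩, rfl⟩
    have h1 : rescaledBdry n a (⇑α) x ≤ a := by
      unfold rescaledBdry
      calc (a / n) * (α ⌊x * a⌋₊ : ℝ) ≤ (a / n) * n := by
            apply mul_le_mul_of_nonneg_left _ hc0
            exact_mod_cast hαle _
        _ = a := by field_simp
    have h2 : 0 ≤ rescaledBdry n a (⇑α) x := by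
      unfold rescaledBdry; positivity
    have h3 : f x ≤ f 0 := hfmono 0 x le_rfl hx
    have h4 : 0 ≤ f x := hf0 x hx
    rw [abs_sub_le_iff]
    constructor <;> nlinarith
  apply ciSup_le
  rintro ⟨x, hx⟩
  set k := ⌊x * a⌋₊ with hkdef
  have hxa : (0:ℝ) ≤ x * a := by positivity
  have hkle : (k:ℝ) ≤ x * a := Nat.floor_le hxa
  have hklt : x * a < k + 1 := Nat.lt_floor_add_one _
  rw [abs_sub_le_iff]
  constructor
  · -- rescaledBdry (ord α) x - f x ≤ sup
    obtain ⟨j, hjk, hαj⟩ := exists_ge α k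
    set x' := max x ((j : ℝ) / a) with hx'def
    have hx'0 : 0 ≤ x' := le_trans hx (le_max_left _ _)
    have hfloor : ⌊x' * a⌋₊ = j := by
      rw [Nat.floor_eq_iff (by positivity)]
      constructor
      · calc (j:ℝ) = (j / a) * a := by field_simp
          _ ≤ x' * a := by
            apply mul_le_mul_of_nonneg_right (le_max_right _ _) (le_of_lt ha)
      · have hkj : (k:ℝ) ≤ (j:ℝ) := Nat.cast_le.mpr hjk
        have h1 : x * a < (j:ℝ) + 1 := by linarith
        have h2 : ((j:ℝ)/a) * a < (j:ℝ) + 1 := by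
          rw [div_mul_cancel₀ _ (ne_of_gt ha)]; linarith
        calc x' * a = max (x * a) (((j:ℝ)/a) * a) := by
              rw [hx'def, max_mul_of_nonneg _ _ ha.le]
          _ < (j:ℝ) + 1 := max_lt h1 h2
    have hfle : f x' ≤ f x := hfmono x x' hx (le_max_left _ _)
    have key : rescaledBdry n a (ord α) x - f x ≤ rescaledBdry n a (⇑α) x' - f x' := by
      have h1 : rescaledBdry n a (ord α) x ≤ rescaledBdry n a (⇑α) x' := by
        unfold rescaledBdry
        rw [hfloor]
        apply mul_le_mul_of_nonneg_left _ hc0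
        exact_mod_cast hαj
      linarith
    calc rescaledBdry n a (ord α) x - f x ≤ rescaledBdry n a (⇑α) x' - f x' := key
      _ ≤ |rescaledBdry n a (⇑α) x' - f x'| := le_abs_self _
      _ ≤ _ := le_ciSup hbdd ⟨x', hx'0⟩
  · -- f x - rescaledBdry (ord α) x ≤ sup
    obtain ⟨j, hjk, hαj⟩ := exists_le α k
    set x' := (j : ℝ) / a with hx'def
    have hx'0 : 0 ≤ x' := by positivity
    have hfloor : ⌊x' * a⌋₊ = j := by
      rw [hx'def]
      rw [div_mul_cancel₀ _ (ne_of_gt ha)]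
      exact Nat.floor_natCast j
    have hx'le : x' ≤ x := by
      rw [hx'def]
      rw [div_le_iff₀ ha]
      calc (j:ℝ) ≤ (k:ℝ) := Nat.cast_le.mpr hjk
        _ ≤ x * a := hkle
    have hfge : f x ≤ f x' := hfmono x' x hx'0 hx'le
    have key : f x - rescaledBdry n a (ord α) x ≤ f x' - rescaledBdry n a (⇑α) x' := by
      have h1 : rescaledBdry n a (⇑α) x' ≤ rescaledBdry n a (ord α) x := by
        unfold rescaledBdry
        rw [hfloor]
        apply mul_le_mul_of_nonneg_left _ hc0
        exact_mod_cast hαj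
      linarith
    calc f x - rescaledBdry n a (ord α) x ≤ f x' - rescaledBdry n a (⇑α) x' := key
      _ ≤ |rescaledBdry n a (⇑α) x' - f x'| := by rw [abs_sub_comm]; exact le_abs_self _
      _ ≤ _ := le_ciSup hbdd ⟨x', hx'0⟩
end

section
/- For each n ≥ 1 let a_n > 0 be a scaling factor, let π_n be a probability distribution on W(n), and let ρ̃_n be the probability distribution on P(n) defined by ρ̃_n(λ) = ∑_{α ∈ W(n) : ord α = λ} π_n(α) (the pushforward of π_n under ord). Let φ : [0,∞) → [0,∞) be a right-continuous, weakly decreasing function with φ(x) → 0 as x → ∞. If for every ε > 0 one has π_n{α ∈ W(n) : |∂̃^{a_n}α(x) − φ(x)| < ε for all x > 0} → 1 as n → ∞, then for every ε > 0 one has ρ̃_n{λ ∈ P(n) : |∂̃^{a_n}λ(x) − φ(x)| < ε for all x > 0} → 1 as n → ∞. -/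
open Filter

/-- λ is a partition of n: a weakly decreasing weak composition of n. -/
def IsPartition (n : ℕ) (lam : ℕ →₀ ℕ) : Prop :=
  IsWeakComp n lam ∧ ∀ i j : ℕ, i ≤ j → lam j ≤ lam i

/-! ### Auxiliary facts about `ord` -/

/-- The sorted (weakly decreasing) list of parts of α. -/
def slist (α : ℕ →₀ ℕ) : List ℕ := ((α.support.val.map ⇑α).sort (· ≤ ·)).reverse

lemma ord_eq_getD (α : ℕ →₀ ℕ) (i : ℕ) : ord α i = (slist α).getD i 0 := rfl

lemma slist_coe (α : ℕ →₀ ℕ) : (↑(slist α) : Multiset ℕ) = α.support.val.map ⇑α := by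
  rw [slist, Multiset.coe_reverse, Multiset.sort_eq]

lemma slist_sorted (α : ℕ →₀ ℕ) : List.Pairwise (fun a b => b ≤ a) (slist α) := by
  rw [slist, List.pairwise_reverse]
  exact Multiset.pairwise_sort _ _

lemma ord_anti_s1 (α : ℕ →₀ ℕ) {i j : ℕ} (hij : i ≤ j) : ord α j ≤ ord α i := by
  rw [ord_eq_getD, ord_eq_getD]
  rcases lt_or_ge j (slist α).length with hj | hj
  · have hi : i < (slist α).length := lt_of_le_of_lt hij hj
    rw [List.getD_eq_getElem _ _ hj, List.getD_eq_getElem _ _ hi]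
    haveI : Std.Refl (fun a b : ℕ => b ≤ a) := ⟨fun a => le_refl a⟩
    have := (slist_sorted α).rel_get_of_le (a := ⟨i, hi⟩) (b := ⟨j, hj⟩) hij
    simpa [List.get_eq_getElem] using this
  · rw [List.getD_eq_default _ _ hj]
    exact Nat.zero_le _

lemma ord_lt_length {α : ℕ →₀ ℕ} {i : ℕ} (h : ord α i ≠ 0) : i < (slist α).length := by
  by_contra hc
  exact h (by rw [ord_eq_getD]; exact List.getD_eq_default _ _ (le_of_not_gt hc))

/-- Bridging cardinalities: support-side filter count equals sorted-list filter count. -/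
lemma card_filter_eq (α : ℕ →₀ ℕ) (p : ℕ → Prop) [DecidablePred p] :
    (α.support.filter (fun j => p (α j))).card
      = ((slist α).filter (fun x => decide (p x))).length := by
  have h1 : (((slist α).filter (fun x => decide (p x))).length : ℕ)
      = Multiset.card (Multiset.filter p ↑(slist α)) := by
    rw [Multiset.filter_coe, Multiset.coe_card]
  rw [h1, slist_coe, Multiset.filter_map, Multiset.card_map, Finset.card, Finset.filter_val]
  rfl

lemma exists_ge_of_ord_pos (α : ℕ →₀ ℕ) (i : ℕ) (hpos : ord α i ≠ 0) :
    ∃ j, i ≤ j ∧ ord α i ≤ α j := by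
  have hi : i < (slist α).length := ord_lt_length hpos
  by_contra hcon
  push_neg at hcon
  -- every element of take (i+1) is ≥ ord α i
  have htake : ∀ x ∈ (slist α).take (i + 1), ord α i ≤ x := by
    intro x hx
    obtain ⟨k, hk, hke⟩ := List.mem_iff_getElem.mp hx
    simp only [List.length_take, lt_inf_iff] at hk
    obtain ⟨hk2, hk'⟩ := hk
    have h5 : x = (slist α)[k] := by rw [← hke]; exact List.getElem_take
    have h6 : (slist α)[k] = ord α k := by
      rw [ord_eq_getD, List.getD_eq_getElem _ _ hk']
    rw [h5, h6]
    exact ord_anti_s1 α (by omega)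
  have hfil : ((slist α).filter (fun x => decide (ord α i ≤ x))).length
      = (α.support.filter (fun j => ord α i ≤ α j)).card := (card_filter_eq α _).symm
  have hlen : i + 1 ≤ ((slist α).filter (fun x => decide (ord α i ≤ x))).length := by
    have h2 : (((slist α).take (i + 1)).filter (fun x => decide (ord α i ≤ x))).Sublist
        ((slist α).filter (fun x => decide (ord α i ≤ x))) :=
      (List.take_sublist _ _).filter _
    have h3 : ((slist α).take (i + 1)).filter (fun x => decide (ord α i ≤ x))
        = (slist α).take (i + 1) :=
      List.filter_eq_self.mpr (fun a ha => by simpa using htake a ha)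
    have h4 := h2.length_le
    rw [h3, List.length_take] at h4
    omega
  have hsub : α.support.filter (fun j => ord α i ≤ α j) ⊆ Finset.range i := by
    intro j hj
    rw [Finset.mem_filter] at hj
    rcases lt_or_ge j i with hlt | hle
    · exact Finset.mem_range.mpr hlt
    · exact absurd hj.2 (not_le_of_gt (hcon j hle))
  have := Finset.card_le_card hsub
  rw [Finset.card_range] at this
  omega

lemma exists_le_ord (α : ℕ →₀ ℕ) (i : ℕ) : ∃ j, j ≤ i ∧ α j ≤ ord α i := by
  by_contra hcon
  push_neg at hcon
  -- all elements of drop i are ≤ ord α i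
  have hdrop : ∀ x ∈ (slist α).drop i, ¬ (ord α i < x) := by
    intro x hx
    obtain ⟨k, hk, hke⟩ := List.mem_iff_getElem.mp hx
    rw [List.length_drop] at hk
    have hk' : i + k < (slist α).length := by omega
    have h5 : x = (slist α)[i + k] := by rw [← hke]; exact List.getElem_drop
    have h6 : (slist α)[i + k] = ord α (i + k) := by
      rw [ord_eq_getD, List.getD_eq_getElem _ _ hk']
    rw [h5, h6]
    exact not_lt_of_ge (ord_anti_s1 α (Nat.le_add_right i k))
  have hlen : ((slist α).filter (fun x => decide (ord α i < x))).length ≤ i := by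
    conv_lhs => rw [← List.take_append_drop i (slist α)]
    rw [List.filter_append, List.length_append]
    have h1 : (((slist α).take i).filter (fun x => decide (ord α i < x))).length ≤ i := by
      calc _ ≤ ((slist α).take i).length := List.length_filter_le _ _
        _ ≤ i := by rw [List.length_take]; omega
    have h2 : ((slist α).drop i).filter (fun x => decide (ord α i < x)) = [] :=
      List.filter_eq_nil_iff.mpr (fun a ha => by simpa using hdrop a ha)
    rw [h2]
    simpa using h1
  have hfil : (α.support.filter (fun j => ord α i < α j)).card
      = ((slist α).filter (fun x => decide (ord α i < x))).length := card_filter_eq α _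
  have hsub : Finset.range (i + 1) ⊆ α.support.filter (fun j => ord α i < α j) := by
    intro j hj
    rw [Finset.mem_range] at hj
    have hgt : ord α i < α j := hcon j (by omega)
    rw [Finset.mem_filter, Finsupp.mem_support_iff]
    exact ⟨by omega, hgt⟩
  have := Finset.card_le_card hsub
  rw [Finset.card_range] at this
  omega

lemma sum_range_getD (l : List ℕ) : ∑ i ∈ Finset.range l.length, l.getD i 0 = l.sum := by
  induction l with
  | nil => simp
  | cons a t ih =>
    rw [List.length_cons, Finset.sum_range_succ']
    simp only [List.getD_cons_succ, List.getD_cons_zero]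
    rw [ih, List.sum_cons, add_comm]

lemma slist_sum (α : ℕ →₀ ℕ) : (slist α).sum = ∑ i ∈ α.support, α i := by
  have := Multiset.sum_coe (slist α)
  rw [slist_coe] at this
  rw [← this]
  rfl

/-- The partition Finsupp whose coercion is `ord α`. -/
noncomputable def lamOf (α : ℕ →₀ ℕ) : ℕ →₀ ℕ :=
  Finsupp.onFinset (Finset.range (slist α).length) (ord α)
    (fun i h => Finset.mem_range.mpr (ord_lt_length h))

lemma coe_lamOf (α : ℕ →₀ ℕ) : ⇑(lamOf α) = ord α := rfl

lemma lamOf_isPartition {n : ℕ} {α : ℕ →₀ ℕ} (h : IsWeakComp n α) :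
    IsPartition n (lamOf α) := by
  constructor
  · show ∑ i ∈ (lamOf α).support, (lamOf α) i = n
    have hsub : (lamOf α).support ⊆ Finset.range (slist α).length :=
      Finsupp.support_onFinset_subset
    rw [Finset.sum_subset hsub (fun i _ hi => Finsupp.notMem_support_iff.mp hi)]
    have heq : ∑ i ∈ Finset.range (slist α).length, (lamOf α) i
        = ∑ i ∈ Finset.range (slist α).length, (slist α).getD i 0 :=
      Finset.sum_congr rfl (fun i _ => by rw [coe_lamOf, ord_eq_getD])
    rw [heq, sum_range_getD, slist_sum]
    exact h
  · intro i j hij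
    rw [coe_lamOf]
    exact ord_anti_s1 α hij

/-- The key rearrangement lemma: if the rescaled boundary of `α` is uniformly `ε`-close to
a weakly decreasing nonnegative `φ`, then so is the rescaled boundary of `ord α`. -/
lemma good_ord (n : ℕ) (a : ℝ) (ha : 0 < a) (φ : ℝ → ℝ) (hφ0 : ∀ x, 0 ≤ x → 0 ≤ φ x)
    (hφmono : ∀ x y, 0 ≤ x → x ≤ y → φ y ≤ φ x) (ε : ℝ) (hε : 0 < ε) (α : ℕ →₀ ℕ)
    (hg : ∀ x : ℝ, 0 < x → |rescaledBdry n a (⇑α) x - φ x| < ε) :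
    ∀ x : ℝ, 0 < x → |rescaledBdry n a (ord α) x - φ x| < ε := by
  rcases Nat.eq_zero_or_pos n with hn | hn
  · subst hn
    intro x hx
    have h1 := hg x hx
    simp only [rescaledBdry, Nat.cast_zero, div_zero, zero_mul] at h1 ⊢
    exact h1
  intro x hx
  have hcpos : 0 < a / (n : ℝ) := div_pos ha (by exact_mod_cast hn)
  set c : ℝ := a / (n : ℝ) with hc
  set i : ℕ := ⌊x * a⌋₊ with hi
  have hxa0 : 0 ≤ x * a := le_of_lt (mul_pos hx ha)
  have hi1 : (i : ℝ) ≤ x * a := Nat.floor_le hxa0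
  have hi2 : x * a < (i : ℝ) + 1 := Nat.lt_floor_add_one _
  show |c * (ord α i : ℝ) - φ x| < ε
  rw [abs_lt]
  constructor
  · -- lower bound: φ x - ε < c * ord α i
    rw [neg_lt, neg_sub]
    by_contra hcon
    push_neg at hcon
    have hle : c * (ord α i : ℝ) ≤ φ x - ε := by linarith
    obtain ⟨j, hji, hj⟩ := exists_le_ord α i
    have hjr : (α j : ℝ) ≤ (ord α i : ℝ) := by exact_mod_cast hj
    have hcj : c * (α j : ℝ) ≤ c * (ord α i : ℝ) :=
      mul_le_mul_of_nonneg_left hjr (le_of_lt hcpos)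
    rcases eq_or_lt_of_le hji with heq | hlt
    · -- j = i : use goodness at x itself
      have hgx := hg x hx
      simp only [rescaledBdry] at hgx
      rw [← hc, ← hi, abs_lt] at hgx
      rw [heq] at hcj
      linarith [hgx.1]
    · -- j < i : use goodness at y = (j + 1/2)/a
      set y : ℝ := ((j : ℝ) + 2⁻¹) / a with hy
      have hy0 : 0 < y := by positivity
      have hya : y * a = (j : ℝ) + 2⁻¹ := by
        rw [hy, div_mul_cancel₀ _ (ne_of_gt ha)]
      have hfloor : ⌊y * a⌋₊ = j := by
        rw [hya, Nat.floor_eq_iff (by positivity)]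
        constructor
        · linarith
        · linarith
      have hyx : y ≤ x := by
        have h1 : y * a ≤ x * a := by
          rw [hya]
          have hji' : (j : ℝ) + 1 ≤ (i : ℝ) := by exact_mod_cast hlt
          linarith
        exact le_of_mul_le_mul_right h1 ha
      have hφyx : φ x ≤ φ y := hφmono y x (le_of_lt hy0) hyx
      have hgy := hg y hy0
      simp only [rescaledBdry] at hgy
      rw [← hc, hfloor, abs_lt] at hgy
      linarith [hgy.1]
  · -- upper bound: c * ord α i < φ x + ε
    by_contra hcon
    push_neg at hcon
    have hφx : 0 ≤ φ x := hφ0 x (le_of_lt hx)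
    have hle : φ x + ε ≤ c * (ord α i : ℝ) := by linarith
    have hpos : ord α i ≠ 0 := by
      intro h0
      rw [h0] at hle
      simp only [Nat.cast_zero, mul_zero] at hle
      linarith
    obtain ⟨j, hji, hj⟩ := exists_ge_of_ord_pos α i hpos
    have hjr : (ord α i : ℝ) ≤ (α j : ℝ) := by exact_mod_cast hj
    have hcj : c * (ord α i : ℝ) ≤ c * (α j : ℝ) :=
      mul_le_mul_of_nonneg_left hjr (le_of_lt hcpos)
    rcases eq_or_lt_of_le hji with heq | hlt
    · have hgx := hg x hx
      simp only [rescaledBdry] at hgx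
      rw [← hc, ← hi, abs_lt] at hgx
      rw [← heq] at hcj
      linarith [hgx.2]
    · set y : ℝ := (j : ℝ) / a with hy
      have hj1 : 1 ≤ j := by omega
      have hy0 : 0 < y := by
        apply div_pos _ ha
        exact_mod_cast hj1
      have hya : y * a = (j : ℝ) := by
        rw [hy, div_mul_cancel₀ _ (ne_of_gt ha)]
      have hfloor : ⌊y * a⌋₊ = j := by rw [hya, Nat.floor_natCast]
      have hxy : x ≤ y := by
        have h1 : x * a ≤ y * a := by
          rw [hya]
          have hij' : (i : ℝ) + 1 ≤ (j : ℝ) := by exact_mod_cast hlt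
          linarith
        exact le_of_mul_le_mul_right h1 ha
      have hφyx : φ y ≤ φ x := hφmono x y (le_of_lt hx) hxy
      have hgy := hg y hy0
      simp only [rescaledBdry] at hgy
      rw [← hc, hfloor, abs_lt] at hgy
      linarith [hgy.2]

theorem stmt1 (a : ℕ → ℝ) (ha : ∀ n, 0 < a n)
    (π : (n : ℕ) → (ℕ →₀ ℕ) → ENNReal)
    (hπsupp : ∀ n α, ¬ IsWeakComp n α → π n α = 0)
    (hπ1 : ∀ n, 1 ≤ n → (∑' α : ℕ →₀ ℕ, π n α) = 1)
    (ρ : (n : ℕ) → (ℕ →₀ ℕ) → ENNReal)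
    (hρ : ∀ n lam, IsPartition n lam →
      ρ n lam = ∑' α : {α : ℕ →₀ ℕ // IsWeakComp n α ∧ ord α = ⇑lam}, π n α.1)
    (hρsupp : ∀ n lam, ¬ IsPartition n lam → ρ n lam = 0)
    (φ : ℝ → ℝ) (hφ0 : ∀ x : ℝ, 0 ≤ x → 0 ≤ φ x)
    (hφmono : ∀ x y : ℝ, 0 ≤ x → x ≤ y → φ y ≤ φ x)
    (hφrc : ∀ x : ℝ, 0 ≤ x → ContinuousWithinAt φ (Set.Ici x) x)
    (hφlim : Tendsto φ atTop (nhds 0))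
    (h : ∀ ε : ℝ, 0 < ε →
      Tendsto (fun n => ∑' α : {α : ℕ →₀ ℕ // IsWeakComp n α ∧
          ∀ x : ℝ, 0 < x → |rescaledBdry n (a n) (⇑α) x - φ x| < ε}, π n α.1)
        atTop (nhds 1)) :
    ∀ ε : ℝ, 0 < ε →
      Tendsto (fun n => ∑' lam : {lam : ℕ →₀ ℕ // IsPartition n lam ∧
          ∀ x : ℝ, 0 < x → |rescaledBdry n (a n) (⇑lam) x - φ x| < ε}, ρ n lam.1)
        atTop (nhds 1) := by
  intro ε hε
  have hT : ∀ n : ℕ,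
      (∑' lam : {lam : ℕ →₀ ℕ // IsPartition n lam ∧
          ∀ x : ℝ, 0 < x → |rescaledBdry n (a n) (⇑lam) x - φ x| < ε}, ρ n lam.1)
      = ∑' p : (Σ lam : {lam : ℕ →₀ ℕ // IsPartition n lam ∧
          ∀ x : ℝ, 0 < x → |rescaledBdry n (a n) (⇑lam) x - φ x| < ε},
          {β : ℕ →₀ ℕ // IsWeakComp n β ∧ ord β = ⇑lam.1}), π n p.2.1 := by
    intro n
    calc (∑' lam : {lam : ℕ →₀ ℕ // IsPartition n lam ∧
          ∀ x : ℝ, 0 < x → |rescaledBdry n (a n) (⇑lam) x - φ x| < ε}, ρ n lam.1)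
        = ∑' (lam : {lam : ℕ →₀ ℕ // IsPartition n lam ∧
            ∀ x : ℝ, 0 < x → |rescaledBdry n (a n) (⇑lam) x - φ x| < ε})
            (β : {β : ℕ →₀ ℕ // IsWeakComp n β ∧ ord β = ⇑lam.1}), π n β.1 :=
          tsum_congr fun lam => hρ n lam.1 lam.2.1
      _ = _ := (ENNReal.tsum_sigma (fun (lam : {lam : ℕ →₀ ℕ // IsPartition n lam ∧
            ∀ x : ℝ, 0 < x → |rescaledBdry n (a n) (⇑lam) x - φ x| < ε})
          (β : {β : ℕ →₀ ℕ // IsWeakComp n β ∧ ord β = ⇑lam.1}) => π n β.1)).symm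
  refine tendsto_of_tendsto_of_tendsto_of_le_of_le' (h ε hε) tendsto_const_nhds ?_ ?_
  · -- lower bound : good weak compositions inject into the sigma type
    filter_upwards with n
    rw [hT n]
    have hinj : Function.Injective
        (fun (αg : {α : ℕ →₀ ℕ // IsWeakComp n α ∧
            ∀ x : ℝ, 0 < x → |rescaledBdry n (a n) (⇑α) x - φ x| < ε}) =>
          (⟨⟨lamOf αg.1, lamOf_isPartition αg.2.1,
              by rw [coe_lamOf]; exact good_ord n (a n) (ha n) φ hφ0 hφmono ε hε αg.1 αg.2.2⟩,
            ⟨αg.1, αg.2.1, (coe_lamOf αg.1).symm⟩⟩ :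
          (Σ lam : {lam : ℕ →₀ ℕ // IsPartition n lam ∧
            ∀ x : ℝ, 0 < x → |rescaledBdry n (a n) (⇑lam) x - φ x| < ε},
            {β : ℕ →₀ ℕ // IsWeakComp n β ∧ ord β = ⇑lam.1}))) := by
      intro p q hpq
      apply Subtype.ext
      exact congrArg (fun r : (Σ lam : {lam : ℕ →₀ ℕ // IsPartition n lam ∧
          ∀ x : ℝ, 0 < x → |rescaledBdry n (a n) (⇑lam) x - φ x| < ε},
          {β : ℕ →₀ ℕ // IsWeakComp n β ∧ ord β = ⇑lam.1}) => (r.2.1 : ℕ →₀ ℕ)) hpq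
    exact ENNReal.tsum_comp_le_tsum_of_injective hinj (fun p => π n p.2.1)
  · -- upper bound : the sigma type injects into all finsupps, total mass 1
    filter_upwards [eventually_ge_atTop 1] with n hn
    rw [hT n]
    have hinj : Function.Injective
        (fun (p : (Σ lam : {lam : ℕ →₀ ℕ // IsPartition n lam ∧
            ∀ x : ℝ, 0 < x → |rescaledBdry n (a n) (⇑lam) x - φ x| < ε},
            {β : ℕ →₀ ℕ // IsWeakComp n β ∧ ord β = ⇑lam.1})) => p.2.1) := by
      rintro ⟨⟨l1, hl1⟩, b1, hb1⟩ ⟨⟨l2, hl2⟩, b2, hb2⟩ hpq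
      obtain rfl : b1 = b2 := hpq
      obtain rfl : l1 = l2 := DFunLike.coe_injective (hb1.2.symm.trans hb2.2)
      rfl
    calc _ ≤ (∑' β : ℕ →₀ ℕ, π n β) := ENNReal.tsum_comp_le_tsum_of_injective hinj (π n)
      _ = 1 := hπ1 n hn
end

section
/- For each n ≥ 2 let 0 < p_n ≤ 1 and 0 < q_n ≤ 1 with p_n·q_n²·n/log n → ∞ as n → ∞, let α^{(0)} = α^{(0,n)} ∈ W(n) be an arbitrary initial configuration, and let (α^{(k)})_{k≥0} be the Markov chain B(n,p_n,q_n) started at α^{(0)}. Set D = ⌈14·log n/(p_n·q_n)⌉ and M = ⌈n²/p_n⌉. Then (1/(q_n·n))·max{N(α^{(D+1)}), N(α^{(D+2)}), …, N(α^{(D+M)})} → 0 in probability as n → ∞. -/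
open Filter

/-- N(α): the number of parts of α, i.e. the largest (1-indexed) position of a positive
part (0 if there is none).  With 0-indexed parts this is (largest index in the support) + 1. -/
def numParts (α : ℕ →₀ ℕ) : ℕ :=
  α.support.sup (· + 1)

/-- The probability that a Binomial(m,p) variable equals k. -/
noncomputable def binomPMF (m : ℕ) (p : ℝ) (k : ℕ) : ENNReal :=
  ENNReal.ofReal ((m.choose k : ℝ) * p ^ k * (1 - p) ^ (m - k))

open scoped Classical in
/-- One-step transition probability of the p-random q-proportion Bulgarian solitaire
B(n,p,q) on weak compositions (parts indexed from 0; the new pile is part 0). -/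
noncomputable def solTrans (p q : ℝ) (α β : ℕ →₀ ℕ) : ENNReal :=
  if (∀ i, β (i + 1) ≤ α i) ∧ β 0 = ∑ i ∈ α.support, (α i - β (i + 1)) then
    ∏ i ∈ α.support, binomPMF ⌈q * (α i : ℝ)⌉₊ p (α i - β (i + 1))
  else 0

/-- The probability that the first m+1 states of the Markov chain with transition
probabilities T started at a form a trajectory satisfying E.  (Trajectories are encoded
as functions ℕ → S frozen from time m on, so that each length-m path is counted once.) -/
noncomputable def pathProb {S : Type*} (T : S → S → ENNReal) (a : S) (m : ℕ)
    (E : (ℕ → S) → Prop) : ENNReal :=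
  ∑' ω : {ω : ℕ → S // ω 0 = a ∧ (∀ j : ℕ, m ≤ j → ω (j + 1) = ω j) ∧ E ω},
    ∏ k ∈ Finset.range m, T (ω.1 k) (ω.1 (k + 1))


section Aux
open Finset
open scoped Classical


lemma binom_sum_one (m : ℕ) (p : ℝ) :
    ∑ k ∈ range (m+1), (m.choose k : ℝ) * p ^ k * (1 - p) ^ (m - k) = 1 := by
  have h := add_pow p (1-p) m
  simp only [add_sub_cancel, one_pow] at h
  rw [show ∑ k ∈ range (m+1), (m.choose k : ℝ) * p ^ k * (1 - p) ^ (m - k)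
      = ∑ k ∈ range (m+1), p ^ k * (1 - p) ^ (m - k) * (m.choose k : ℝ) from
    Finset.sum_congr rfl (fun k _ => by ring)]
  exact h.symm

lemma binom_mean (m : ℕ) (p : ℝ) :
    ∑ k ∈ range (m+1), (k : ℝ) * ((m.choose k : ℝ) * p ^ k * (1 - p) ^ (m - k)) = m * p := by
  induction m with
  | zero => simp
  | succ n _ =>
    rw [Finset.sum_range_succ']
    have key : ∀ i : ℕ, i ∈ range (n+1) →
        ((i+1 : ℕ) : ℝ) * (((n+1).choose (i+1) : ℝ) * p ^ (i+1) * (1 - p) ^ (n+1-(i+1)))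
        = ((n+1 : ℕ) : ℝ) * p * ((n.choose i : ℝ) * p ^ i * (1 - p) ^ (n - i)) := by
      intro i _
      have h1 : (n+1) * n.choose i = (n+1).choose (i+1) * (i+1) := Nat.add_one_mul_choose_eq n i
      have h2 : ((n+1 : ℕ) : ℝ) * (n.choose i : ℝ) = ((n+1).choose (i+1) : ℝ) * ((i+1 : ℕ) : ℝ) := by
        exact_mod_cast congrArg (Nat.cast : ℕ → ℝ) h1
      have h3 : n + 1 - (i+1) = n - i := by omega
      rw [h3]
      push_cast at h2 ⊢
      linear_combination -(p ^ (i+1) * (1 - p) ^ (n - i)) * h2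
    rw [Finset.sum_congr rfl key]
    push_cast
    rw [← Finset.mul_sum, binom_sum_one n p]
    simp

lemma binom_term_nonneg {p : ℝ} (hp0 : 0 ≤ p) (hp1 : p ≤ 1) (m k : ℕ) :
    0 ≤ (m.choose k : ℝ) * p ^ k * (1 - p) ^ (m - k) := by
  have h1 : (0:ℝ) ≤ 1 - p := by linarith
  positivity

lemma sum_trunc {M : Type*} [AddCommMonoid M] (m a : ℕ) (hma : m ≤ a) (f : ℕ → M)
    (hf : ∀ k, m < k → f k = 0) :
    ∑ k ∈ range (a+1), f k = ∑ k ∈ range (m+1), f k := by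
  refine (Finset.sum_subset (by simp; omega) ?_).symm
  intro x hx hx'
  simp only [mem_range] at hx hx'
  exact hf x (by omega)

lemma choose_zero_of_lt (m k : ℕ) (h : m < k) : (m.choose k : ℝ) = 0 := by
  rw [Nat.choose_eq_zero_of_lt h]; simp

/-- sum over 0..a of binomPMF m p equals 1, for m ≤ a -/
lemma binomPMF_sum_one {p : ℝ} (hp0 : 0 ≤ p) (hp1 : p ≤ 1) {m a : ℕ} (hma : m ≤ a) :
    ∑ k ∈ range (a+1), binomPMF m p k = 1 := by
  unfold binomPMF
  rw [← ENNReal.ofReal_sum_of_nonneg (fun k _ => binom_term_nonneg hp0 hp1 m k)]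
  rw [sum_trunc m a hma _ (fun k hk => by rw [Nat.choose_eq_zero_of_lt hk]; simp)]
  rw [binom_sum_one m p, ENNReal.ofReal_one]

/-- sum over 0..a of binomPMF m p k * (a - k) ≤ (1 - p*q) * a when q*a ≤ m ≤ a -/
lemma binomPMF_sum_rem {p q : ℝ} (hp0 : 0 ≤ p) (hp1 : p ≤ 1) (hq0 : 0 ≤ q) (hq1 : q ≤ 1) {m a : ℕ}
    (hma : m ≤ a) (hqa : q * a ≤ m) :
    ∑ k ∈ range (a+1), binomPMF m p k * ((a - k : ℕ) : ENNReal)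
      ≤ ENNReal.ofReal (1 - p * q) * (a : ENNReal) := by
  have hterm : ∀ k, binomPMF m p k * ((a - k : ℕ) : ENNReal)
      = ENNReal.ofReal (((m.choose k : ℝ) * p ^ k * (1 - p) ^ (m - k)) * ((a - k : ℕ) : ℝ)) := by
    intro k
    rw [binomPMF, ← ENNReal.ofReal_natCast (a - k), ← ENNReal.ofReal_mul (binom_term_nonneg hp0 hp1 m k)]
  simp only [hterm]
  rw [← ENNReal.ofReal_sum_of_nonneg (fun k _ => mul_nonneg (binom_term_nonneg hp0 hp1 m k) (Nat.cast_nonneg _))]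
  rw [← ENNReal.ofReal_natCast a, ← ENNReal.ofReal_mul (by nlinarith [mul_le_one₀ hp1 hq0 hq1])]
  apply ENNReal.ofReal_le_ofReal
  -- real inequality
  have hsum : ∑ k ∈ range (a+1), ((m.choose k : ℝ) * p ^ k * (1 - p) ^ (m - k)) * ((a - k : ℕ) : ℝ)
      = (a : ℝ) - m * p := by
    have hcast : ∀ k ∈ range (a+1), ((m.choose k : ℝ) * p ^ k * (1 - p) ^ (m - k)) * ((a - k : ℕ) : ℝ)
        = (a : ℝ) * ((m.choose k : ℝ) * p ^ k * (1 - p) ^ (m - k))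
          - (k : ℝ) * ((m.choose k : ℝ) * p ^ k * (1 - p) ^ (m - k)) := by
      intro k hk
      simp only [mem_range] at hk
      have : ((a - k : ℕ) : ℝ) = (a : ℝ) - (k : ℝ) := by
        rw [Nat.cast_sub (by omega)]
      rw [this]; ring
    rw [Finset.sum_congr rfl hcast, Finset.sum_sub_distrib, ← Finset.mul_sum]
    rw [sum_trunc m a hma _ (fun k hk => by rw [Nat.choose_eq_zero_of_lt hk]; simp),
        sum_trunc m a hma _ (fun k hk => by rw [Nat.choose_eq_zero_of_lt hk]; simp),
        binom_sum_one m p, binom_mean m p]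
    ring
  rw [hsum]
  nlinarith [hqa, hp0]

/-- build the next state from the remainders Y -/
noncomputable def nextOf (α : ℕ →₀ ℕ) (Y : (i : ℕ) → i ∈ α.support → ℕ) : ℕ →₀ ℕ :=
  Finsupp.onFinset (insert 0 (α.support.image (· + 1)))
    (fun j => Nat.casesOn j (∑ i ∈ α.support.attach, (α ↑i - Y ↑i i.2))
      (fun i => if h : i ∈ α.support then Y i h else 0))
    (by
      intro j hj
      cases j with
      | zero => simp
      | succ i =>
        simp only [Finset.mem_insert, Finset.mem_image]
        right
        refine ⟨i, ?_, rfl⟩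
        by_contra h
        simp [h] at hj)

@[simp] lemma nextOf_zero (α : ℕ →₀ ℕ) (Y : (i : ℕ) → i ∈ α.support → ℕ) :
    nextOf α Y 0 = ∑ i ∈ α.support.attach, (α ↑i - Y ↑i i.2) := rfl

lemma nextOf_succ (α : ℕ →₀ ℕ) (Y : (i : ℕ) → i ∈ α.support → ℕ) (i : ℕ) :
    nextOf α Y (i + 1) = if h : i ∈ α.support then Y i h else 0 := rfl

lemma nextOf_succ_mem (α : ℕ →₀ ℕ) (Y : (i : ℕ) → i ∈ α.support → ℕ) (i : ℕ)
    (h : i ∈ α.support) : nextOf α Y (i + 1) = Y i h := by rw [nextOf_succ, dif_pos h]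

lemma solTrans_tsum (p q : ℝ) (α : ℕ →₀ ℕ) (F : (ℕ →₀ ℕ) → ENNReal) :
    ∑' β, solTrans p q α β * F β
    = ∑ Y ∈ α.support.pi (fun i => range (α i + 1)),
        (∏ i ∈ α.support.attach, binomPMF ⌈q * (α ↑i : ℝ)⌉₊ p (α ↑i - Y ↑i i.2))
          * F (nextOf α Y) := by
  classical
  set s := α.support with hs
  set B := (s.pi (fun i => range (α i + 1))).image (nextOf α) with hB
  have hzero : ∀ β ∉ B, solTrans p q α β * F β = 0 := by
    intro β hβ
    rw [solTrans]
    split_ifs with hcond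
    · exfalso
      apply hβ
      rw [hB, Finset.mem_image]
      refine ⟨fun i _ => β (i + 1), ?_, ?_⟩
      · rw [Finset.mem_pi]
        intro i hi
        rw [mem_range]
        exact Nat.lt_succ_of_le (hcond.1 i)
      · ext j
        cases j with
        | zero =>
          rw [nextOf_zero, hcond.2]
          exact Finset.sum_attach s (fun i => α i - β (i + 1))
        | succ i =>
          rw [nextOf_succ]
          split_ifs with h
          · rfl
          · have : α i = 0 := by
              by_contra h'
              exact h (Finsupp.mem_support_iff.mpr h')
            have := hcond.1 i
            omega
    · simp
  rw [tsum_eq_sum (s := B) hzero, hB]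
  rw [Finset.sum_image ?hinj]
  case hinj =>
    intro Y hY Y' hY' hYY
    funext i hi
    have := congrArg (fun β => β (i + 1)) hYY
    simpa [nextOf_succ_mem _ _ _ hi] using this
  apply Finset.sum_congr rfl
  intro Y hY
  congr 1
  rw [solTrans]
  have hYle : ∀ i (h : i ∈ s), Y i h ≤ α i := by
    intro i h
    have := (Finset.mem_pi.mp hY) i h
    rw [mem_range] at this
    omega
  have hcond : (∀ i, nextOf α Y (i + 1) ≤ α i) ∧
      nextOf α Y 0 = ∑ i ∈ α.support, (α i - nextOf α Y (i + 1)) := by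
    constructor
    · intro i
      rw [nextOf_succ]
      split_ifs with h
      · exact hYle i h
      · exact Nat.zero_le _
    · rw [nextOf_zero, ← Finset.sum_attach s (fun i => α i - nextOf α Y (i + 1))]
      apply Finset.sum_congr rfl
      intro x _
      rw [nextOf_succ_mem _ _ _ x.2]
  rw [if_pos hcond]
  rw [← Finset.prod_attach s (fun i => binomPMF ⌈q * (α i : ℝ)⌉₊ p (α i - nextOf α Y (i + 1)))]
  apply Finset.prod_congr rfl
  intro x _
  rw [nextOf_succ_mem _ _ _ x.2]

lemma ceil_le_self {q : ℝ} (hq1 : q ≤ 1) (hq0 : 0 ≤ q) (a : ℕ) : ⌈q * (a : ℝ)⌉₊ ≤ a :=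
  Nat.ceil_le.mpr (by nlinarith [Nat.cast_nonneg (α := ℝ) a])

lemma solTrans_sum_one {p q : ℝ} (hp0 : 0 ≤ p) (hp1 : p ≤ 1) (hq0 : 0 ≤ q) (hq1 : q ≤ 1)
    (α : ℕ →₀ ℕ) : ∑' β, solTrans p q α β ≤ 1 := by
  have h : ∑' β, solTrans p q α β = ∑' β, solTrans p q α β * (fun _ => (1:ENNReal)) β := by
    simp
  rw [h, solTrans_tsum]
  simp only [mul_one]
  have key := Finset.prod_sum (α.support) (fun i => range (α i + 1))
    (fun i y => binomPMF ⌈q * (α i : ℝ)⌉₊ p (α i - y))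
  rw [← key]
  apply le_of_eq
  apply Finset.prod_eq_one
  intro i hi
  have hrefl := Finset.sum_range_reflect (fun j => binomPMF ⌈q * (α i : ℝ)⌉₊ p j) (α i + 1)
  simp only [Nat.add_sub_cancel] at hrefl
  rw [hrefl]
  exact binomPMF_sum_one hp0 hp1 (ceil_le_self hq1 hq0 (α i))

lemma solTrans_exp_coord {p q : ℝ} (hp0 : 0 ≤ p) (hp1 : p ≤ 1) (hq0 : 0 < q) (hq1 : q ≤ 1)
    (α : ℕ →₀ ℕ) (i₀ : ℕ) :
    ∑' β, solTrans p q α β * ((β (i₀ + 1) : ℕ) : ENNReal)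
      ≤ ENNReal.ofReal (1 - p * q) * ((α i₀ : ℕ) : ENNReal) := by
  rw [solTrans_tsum p q α (fun β => ((β (i₀ + 1) : ℕ) : ENNReal))]
  by_cases h : i₀ ∈ α.support
  · -- rewrite each summand into a pure product
    have hsummand : ∀ Y ∈ α.support.pi (fun i => range (α i + 1)),
        (∏ i ∈ α.support.attach, binomPMF ⌈q * (α ↑i : ℝ)⌉₊ p (α ↑i - Y ↑i i.2))
          * ((nextOf α Y (i₀ + 1) : ℕ) : ENNReal)
        = ∏ i ∈ α.support.attach,
            (binomPMF ⌈q * (α ↑i : ℝ)⌉₊ p (α ↑i - Y ↑i i.2)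
              * (if (↑i : ℕ) = i₀ then ((Y ↑i i.2 : ℕ) : ENNReal) else 1)) := by
      intro Y hY
      rw [Finset.prod_mul_distrib]
      congr 1
      rw [Finset.prod_eq_single (⟨i₀, h⟩ : {x // x ∈ α.support})]
      · rw [if_pos rfl, nextOf_succ_mem _ _ _ h]
      · intro b _ hb
        rw [if_neg]
        intro hbi
        exact hb (Subtype.ext hbi)
      · intro hni
        exact absurd (Finset.mem_attach _ _) hni
    rw [Finset.sum_congr rfl hsummand]
    have key := Finset.prod_sum (α.support) (fun i => range (α i + 1))
      (fun i y => binomPMF ⌈q * (α i : ℝ)⌉₊ p (α i - y)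
        * (if i = i₀ then ((y : ℕ) : ENNReal) else 1))
    rw [← key]
    calc ∏ i ∈ α.support, ∑ y ∈ range (α i + 1),
            binomPMF ⌈q * (α i : ℝ)⌉₊ p (α i - y) * (if i = i₀ then ((y : ℕ) : ENNReal) else 1)
        = ∑ y ∈ range (α i₀ + 1), binomPMF ⌈q * (α i₀ : ℝ)⌉₊ p (α i₀ - y) * ((y : ℕ) : ENNReal) := by
          rw [Finset.prod_eq_single i₀]
          · apply Finset.sum_congr rfl
            intro y _
            rw [if_pos rfl]
          · intro i hi hii
            have : ∀ y ∈ range (α i + 1),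
                binomPMF ⌈q * (α i : ℝ)⌉₊ p (α i - y) * (if i = i₀ then ((y : ℕ) : ENNReal) else 1)
                = binomPMF ⌈q * (α i : ℝ)⌉₊ p (α i - y) := by
              intro y _
              rw [if_neg hii, mul_one]
            rw [Finset.sum_congr rfl this]
            have hrefl := Finset.sum_range_reflect (fun j => binomPMF ⌈q * (α i : ℝ)⌉₊ p j) (α i + 1)
            simp only [Nat.add_sub_cancel] at hrefl
            rw [hrefl]
            exact binomPMF_sum_one hp0 hp1 (ceil_le_self hq1 hq0.le (α i))
          · intro hni
            exact absurd h hni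
      _ ≤ ENNReal.ofReal (1 - p * q) * ((α i₀ : ℕ) : ENNReal) := by
          have hrefl := Finset.sum_range_reflect
            (fun j => binomPMF ⌈q * (α i₀ : ℝ)⌉₊ p j * ((α i₀ - j : ℕ) : ENNReal)) (α i₀ + 1)
          simp only [Nat.add_sub_cancel] at hrefl
          have hcg : ∀ y ∈ range (α i₀ + 1),
              binomPMF ⌈q * (α i₀ : ℝ)⌉₊ p (α i₀ - y) * ((y : ℕ) : ENNReal)
              = binomPMF ⌈q * (α i₀ : ℝ)⌉₊ p (α i₀ - y) * ((α i₀ - (α i₀ - y) : ℕ) : ENNReal) := by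
            intro y hy
            rw [mem_range] at hy
            congr 2
            omega
          rw [Finset.sum_congr rfl hcg, hrefl]
          exact binomPMF_sum_rem hp0 hp1 hq0.le hq1 (ceil_le_self hq1 hq0.le (α i₀))
            (Nat.le_ceil _)
  · -- i₀ not in support: every term is zero
    have : ∀ Y ∈ α.support.pi (fun i => range (α i + 1)),
        (∏ i ∈ α.support.attach, binomPMF ⌈q * (α ↑i : ℝ)⌉₊ p (α ↑i - Y ↑i i.2))
          * ((nextOf α Y (i₀ + 1) : ℕ) : ENNReal) = 0 := by
      intro Y _
      rw [nextOf_succ, dif_neg h]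
      simp
    rw [Finset.sum_congr rfl this]
    simp

lemma solTrans_cond {p q : ℝ} {α β : ℕ →₀ ℕ} (h : solTrans p q α β ≠ 0) :
    (∀ i, β (i + 1) ≤ α i) ∧ β 0 = ∑ i ∈ α.support, (α i - β (i + 1)) := by
  by_contra hc
  rw [solTrans, if_neg hc] at h
  exact h rfl

lemma solTrans_total {p q : ℝ} {α β : ℕ →₀ ℕ} (h : solTrans p q α β ≠ 0) :
    ∑ j ∈ β.support, β j = ∑ i ∈ α.support, α i := by
  obtain ⟨h1, h2⟩ := solTrans_cond h
  have hsub : β.support ⊆ insert 0 (α.support.image (· + 1)) := by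
    intro j hj
    rw [Finsupp.mem_support_iff] at hj
    cases j with
    | zero => simp
    | succ i =>
      rw [Finset.mem_insert, Finset.mem_image]
      right
      refine ⟨i, ?_, rfl⟩
      rw [Finsupp.mem_support_iff]
      intro hαi
      have := h1 i
      omega
  rw [Finset.sum_subset hsub (fun x _ hx => by
    rwa [← Finsupp.notMem_support_iff])]
  rw [Finset.sum_insert (by simp)]
  rw [Finset.sum_image (by intro x _ y _ h; simpa using h)]
  rw [h2, ← Finset.sum_add_distrib]
  apply Finset.sum_congr rfl
  intro i _
  have := h1 i
  omega

noncomputable def PE {S : Type*} (T : S → S → ENNReal) (f : S → ENNReal) : ℕ → S → ENNReal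
  | 0 => f
  | (k+1) => fun a => ∑' b, T a b * PE T f k b

def consPath {S : Type*} (a : S) (ω : ℕ → S) : ℕ → S := fun n => Nat.casesOn n a ω

lemma consPath_shift {S : Type*} {a : S} (ω : ℕ → S) (h : ω 0 = a) :
    consPath a (fun n => ω (n + 1)) = ω := by
  funext n
  cases n with
  | zero => exact h.symm
  | succ n => rfl

lemma pathProb_succ {S : Type*} (T : S → S → ENNReal) (a : S) (m : ℕ) (E : (ℕ → S) → Prop) :
    pathProb T a (m+1) E = ∑' b : S, T a b * pathProb T b m (fun ω => E (consPath a ω)) := by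
  have h2 : ∀ b, T a b * pathProb T b m (fun ω => E (consPath a ω))
      = ∑' ω : {ω : ℕ → S // ω 0 = b ∧ (∀ j : ℕ, m ≤ j → ω (j + 1) = ω j) ∧ E (consPath a ω)},
          T a b * ∏ k ∈ Finset.range m, T (ω.1 k) (ω.1 (k + 1)) := by
    intro b
    rw [pathProb, ← ENNReal.tsum_mul_left]
  simp only [h2]
  rw [← ENNReal.tsum_sigma]
  let e : {ω : ℕ → S // ω 0 = a ∧ (∀ j : ℕ, m + 1 ≤ j → ω (j + 1) = ω j) ∧ E ω}
      ≃ Σ b : S, {ω : ℕ → S // ω 0 = b ∧ (∀ j : ℕ, m ≤ j → ω (j + 1) = ω j) ∧ E (consPath a ω)} :=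
    { toFun := fun ω => ⟨ω.1 1, ⟨fun n => ω.1 (n + 1), rfl, fun j hj => ω.2.2.1 (j + 1) (by omega),
        by rw [consPath_shift _ ω.2.1]; exact ω.2.2.2⟩⟩
      invFun := fun x => ⟨consPath a x.2.1, rfl, fun j hj => by
          cases j with
          | zero => omega
          | succ i =>
            show x.2.1 (i + 1) = x.2.1 i
            exact x.2.2.2.1 i (by omega), x.2.2.2.2⟩
      left_inv := fun ω => Subtype.ext (consPath_shift ω.1 ω.2.1)
      right_inv := fun x => by
        obtain ⟨b, ω', h0, hrest⟩ := x
        subst h0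
        rfl }
  rw [← Equiv.tsum_eq e (fun σ => T a σ.1 * ∏ k ∈ Finset.range m, T (σ.2.1 k) (σ.2.1 (k + 1)))]
  rw [pathProb]
  apply tsum_congr
  intro ω
  show ∏ k ∈ Finset.range (m+1), T (ω.1 k) (ω.1 (k + 1))
      = T a (ω.1 1) * ∏ k ∈ Finset.range m, T (ω.1 (k + 1)) (ω.1 (k + 2))
  rw [Finset.prod_range_succ' (fun k => T (ω.1 k) (ω.1 (k + 1))) m, ω.2.1, mul_comm]

lemma tsum_le_one_of_subsingleton {X : Type*} [Subsingleton X] (f : X → ENNReal)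
    (hf : ∀ x, f x ≤ 1) : ∑' x, f x ≤ 1 := by
  cases isEmpty_or_nonempty X with
  | inl h => simp [tsum_empty]
  | inr h =>
    obtain ⟨x0⟩ := h
    rw [tsum_eq_single x0 (fun b hb => absurd (Subsingleton.elim b x0) hb)]
    exact hf x0

lemma pathProb_le_one {S : Type*} (T : S → S → ENNReal) (hT : ∀ s, ∑' b, T s b ≤ 1) :
    ∀ (m : ℕ) (a : S) (E : (ℕ → S) → Prop), pathProb T a m E ≤ 1 := by
  intro m
  induction m with
  | zero =>
    intro a E
    rw [pathProb]
    haveI : Subsingleton {ω : ℕ → S // ω 0 = a ∧ (∀ j : ℕ, 0 ≤ j → ω (j + 1) = ω j) ∧ E ω} := by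
      constructor
      intro x y
      apply Subtype.ext
      funext n
      have hx : ∀ n, x.1 n = a := by
        intro n; induction n with
        | zero => exact x.2.1
        | succ i ih => rw [x.2.2.1 i (Nat.zero_le _), ih]
      have hy : ∀ n, y.1 n = a := by
        intro n; induction n with
        | zero => exact y.2.1
        | succ i ih => rw [y.2.2.1 i (Nat.zero_le _), ih]
      rw [hx n, hy n]
    exact tsum_le_one_of_subsingleton _ (fun x => by simp)
  | succ m ih =>
    intro a E
    rw [pathProb_succ]
    calc ∑' b, T a b * pathProb T b m (fun ω => E (consPath a ω))
        ≤ ∑' b, T a b * 1 := ENNReal.tsum_le_tsum (fun b => mul_le_mul_right (ih b _) _)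
      _ ≤ 1 := by simpa using hT a

lemma pathProb_le_PE {S : Type*} (T : S → S → ENNReal) (hT : ∀ s, ∑' b, T s b ≤ 1)
    (A : S → Prop) :
    ∀ (k m : ℕ) (a : S), k ≤ m →
      pathProb T a m (fun ω => A (ω k)) ≤ PE T (fun s => if A s then 1 else 0) k a := by
  intro k
  induction k with
  | zero =>
    intro m a _
    by_cases hA : A a
    · rw [show PE T (fun s => if A s then 1 else 0) 0 a = 1 from if_pos hA]
      exact pathProb_le_one T hT m a _
    · have : IsEmpty {ω : ℕ → S // ω 0 = a ∧ (∀ j : ℕ, m ≤ j → ω (j + 1) = ω j) ∧ A (ω 0)} :=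
        ⟨fun ω => hA (ω.2.1 ▸ ω.2.2.2)⟩
      rw [pathProb, tsum_empty]
      exact zero_le
  | succ k ih =>
    intro m a hkm
    cases m with
    | zero => omega
    | succ m' =>
      rw [pathProb_succ]
      show (∑' b, T a b * pathProb T b m' (fun ω => A (ω k))) ≤ _
      calc ∑' b, T a b * pathProb T b m' (fun ω => A (ω k))
          ≤ ∑' b, T a b * PE T (fun s => if A s then 1 else 0) k b :=
            ENNReal.tsum_le_tsum (fun b => mul_le_mul_right (ih m' b (by omega)) _)
        _ = PE T (fun s => if A s then 1 else 0) (k+1) a := rfl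

lemma PE_mono {S : Type*} (T : S → S → ENNReal) {f g : S → ENNReal} (h : ∀ s, f s ≤ g s) :
    ∀ (k : ℕ) (a : S), PE T f k a ≤ PE T g k a := by
  intro k
  induction k with
  | zero => exact h
  | succ k ih => exact fun a => ENNReal.tsum_le_tsum (fun b => mul_le_mul_right (ih b) _)

lemma PE_mul_const {S : Type*} (T : S → S → ENNReal) (c : ENNReal) (f : S → ENNReal) :
    ∀ (k : ℕ) (a : S), PE T (fun s => c * f s) k a = c * PE T f k a := by
  intro k
  induction k with
  | zero => intro a; rfl
  | succ k ih =>
    intro a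
    show (∑' b, T a b * PE T (fun s => c * f s) k b) = c * ∑' b, T a b * PE T f k b
    rw [← ENNReal.tsum_mul_left]
    apply tsum_congr
    intro b
    rw [ih b]
    ring

lemma PE_succ' {S : Type*} (T : S → S → ENNReal) (f : S → ENNReal) :
    ∀ (k : ℕ) (a : S), PE T f (k+1) a = PE T (fun s => ∑' b, T s b * f b) k a := by
  intro k
  induction k with
  | zero => intro a; rfl
  | succ k ih =>
    intro a
    show (∑' b, T a b * PE T f (k+1) b) = ∑' b, T a b * PE T (fun s => ∑' b, T s b * f b) k b
    exact tsum_congr (fun b => by rw [ih b])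

lemma PE_invariant_bound {S : Type*} (T : S → S → ENNReal) (hT : ∀ s, ∑' b, T s b ≤ 1)
    (g : S → Prop) (hg : ∀ a b, g a → T a b ≠ 0 → g b) (f : S → ENNReal) (C : ENNReal)
    (hf : ∀ s, g s → f s ≤ C) :
    ∀ (k : ℕ) (a : S), g a → PE T f k a ≤ C := by
  intro k
  induction k with
  | zero => exact hf
  | succ k ih =>
    intro a ha
    show (∑' b, T a b * PE T f k b) ≤ C
    calc ∑' b, T a b * PE T f k b
        ≤ ∑' b, T a b * C := by
          apply ENNReal.tsum_le_tsum
          intro b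
          by_cases hb : T a b = 0
          · simp [hb]
          · exact mul_le_mul_right (ih b (hg a b ha hb)) _
      _ = (∑' b, T a b) * C := ENNReal.tsum_mul_right
      _ ≤ 1 * C := mul_le_mul_left (hT a) C
      _ = C := one_mul C

lemma le_total_sum (a : ℕ →₀ ℕ) (j : ℕ) : a j ≤ ∑ i ∈ a.support, a i := by
  by_cases h : j ∈ a.support
  · exact Finset.single_le_sum (fun i _ => Nat.zero_le _) h
  · rw [Finsupp.notMem_support_iff.mp h]
    exact Nat.zero_le _

lemma PE_coord {p q : ℝ} (hp0 : 0 < p) (hp1 : p ≤ 1) (hq0 : 0 < q) (hq1 : q ≤ 1) (n : ℕ) :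
    ∀ (k j : ℕ) (a : ℕ →₀ ℕ), (∑ i ∈ a.support, a i) = n →
      PE (solTrans p q) (fun s => ((s j : ℕ) : ENNReal)) k a
        ≤ (ENNReal.ofReal (1 - p * q)) ^ (min j k) * (n : ENNReal) := by
  have hbound : ∀ (k : ℕ) (j : ℕ) (a : ℕ →₀ ℕ), (∑ i ∈ a.support, a i) = n →
      PE (solTrans p q) (fun s => ((s j : ℕ) : ENNReal)) k a ≤ (n : ENNReal) := by
    intro k j a ha
    apply PE_invariant_bound (solTrans p q)
      (fun s => solTrans_sum_one hp0.le hp1 hq0.le hq1 s)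
      (fun s => (∑ i ∈ s.support, s i) = n)
      (fun a b hga hab => by rw [← hga]; exact solTrans_total hab)
    · intro s hs
      have := le_total_sum s j
      rw [hs] at this
      exact_mod_cast Nat.cast_le.mpr this
    · exact ha
  intro k
  induction k with
  | zero =>
    intro j a ha
    simpa [Nat.min_zero, PE] using hbound 0 j a ha
  | succ k ih =>
    intro j a ha
    cases j with
    | zero =>
      simpa [Nat.zero_min] using hbound (k+1) 0 a ha
    | succ j =>
      rw [PE_succ']
      calc PE (solTrans p q) (fun s => ∑' b, solTrans p q s b * ((b (j+1) : ℕ) : ENNReal)) k a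
          ≤ PE (solTrans p q)
              (fun s => ENNReal.ofReal (1 - p * q) * ((s j : ℕ) : ENNReal)) k a :=
            PE_mono _ (fun s => solTrans_exp_coord hp0.le hp1 hq0 hq1 s j) k a
        _ = ENNReal.ofReal (1 - p * q)
              * PE (solTrans p q) (fun s => ((s j : ℕ) : ENNReal)) k a :=
            PE_mul_const _ _ _ k a
        _ ≤ ENNReal.ofReal (1 - p * q) * ((ENNReal.ofReal (1 - p * q)) ^ (min j k) * n) :=
            mul_le_mul_right (ih j a ha) _
        _ = (ENNReal.ofReal (1 - p * q)) ^ (min (j+1) (k+1)) * n := by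
            rw [Nat.succ_min_succ, pow_succ]
            ring

lemma witness_bound {p q : ℝ} (hp0 : 0 < p) (hp1 : p ≤ 1) (hq0 : 0 < q) (hq1 : q ≤ 1)
    (n k j m : ℕ) (hkm : k ≤ m) (a : ℕ →₀ ℕ) (ha : (∑ i ∈ a.support, a i) = n) :
    pathProb (solTrans p q) a m (fun ω => 1 ≤ (ω k) j)
      ≤ (ENNReal.ofReal (1 - p * q)) ^ (min j k) * (n : ENNReal) := by
  refine le_trans
    (pathProb_le_PE _ (fun s => solTrans_sum_one hp0.le hp1 hq0.le hq1 s) (fun s => 1 ≤ s j) k m a hkm)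
    (le_trans (PE_mono _ ?_ k a) (PE_coord hp0 hp1 hq0 hq1 n k j a ha))
  intro s
  split_ifs with h
  · exact_mod_cast Nat.one_le_cast.mpr h
  · exact zero_le

lemma pathProb_union {S : Type*} (T : S → S → ENNReal) (a : S) (m : ℕ)
    (E : (ℕ → S) → Prop) {ι : Type*} (W : Finset ι) (Ew : ι → (ℕ → S) → Prop)
    (h : ∀ ω : ℕ → S, ω 0 = a → (∀ j, m ≤ j → ω (j + 1) = ω j) → E ω →
      (∏ k ∈ Finset.range m, T (ω k) (ω (k + 1))) ≠ 0 → ∃ w ∈ W, Ew w ω) :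
    pathProb T a m E ≤ ∑ w ∈ W, pathProb T a m (Ew w) := by
  have hrw : ∀ (E' : (ℕ → S) → Prop), pathProb T a m E'
      = ∑' ω : ℕ → S, Set.indicator {ω : ℕ → S | ω 0 = a ∧ (∀ j : ℕ, m ≤ j → ω (j + 1) = ω j) ∧ E' ω}
          (fun ω => ∏ k ∈ Finset.range m, T (ω k) (ω (k + 1))) ω := by
    intro E'
    rw [pathProb]
    exact _root_.tsum_subtype
      {ω : ℕ → S | ω 0 = a ∧ (∀ j : ℕ, m ≤ j → ω (j + 1) = ω j) ∧ E' ω}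
      (fun ω => ∏ k ∈ Finset.range m, T (ω k) (ω (k + 1)))
  rw [hrw]
  have hsum : ∀ w ∈ W, Summable (fun ω : ℕ → S =>
      Set.indicator {ω : ℕ → S | ω 0 = a ∧ (∀ j : ℕ, m ≤ j → ω (j + 1) = ω j) ∧ Ew w ω}
        (fun ω => ∏ k ∈ Finset.range m, T (ω k) (ω (k + 1))) ω) := fun _ _ => ENNReal.summable
  calc (∑' ω : ℕ → S, Set.indicator {ω : ℕ → S | ω 0 = a ∧ (∀ j : ℕ, m ≤ j → ω (j + 1) = ω j) ∧ E ω}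
          (fun ω => ∏ k ∈ Finset.range m, T (ω k) (ω (k + 1))) ω)
      ≤ ∑' ω : ℕ → S, ∑ w ∈ W,
          Set.indicator {ω : ℕ → S | ω 0 = a ∧ (∀ j : ℕ, m ≤ j → ω (j + 1) = ω j) ∧ Ew w ω}
            (fun ω => ∏ k ∈ Finset.range m, T (ω k) (ω (k + 1))) ω := by
        apply ENNReal.tsum_le_tsum
        intro ω
        by_cases hω : ω ∈ {ω : ℕ → S | ω 0 = a ∧ (∀ j : ℕ, m ≤ j → ω (j + 1) = ω j) ∧ E ω}
        · rw [Set.indicator_of_mem hω]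
          by_cases hz : (∏ k ∈ Finset.range m, T (ω k) (ω (k + 1))) = 0
          · rw [hz]; exact zero_le
          · obtain ⟨w, hwW, hw⟩ := h ω hω.1 hω.2.1 hω.2.2 hz
            have hmem : ω ∈ {ω : ℕ → S | ω 0 = a ∧ (∀ j : ℕ, m ≤ j → ω (j + 1) = ω j) ∧ Ew w ω} :=
              ⟨hω.1, hω.2.1, hw⟩
            calc (∏ k ∈ Finset.range m, T (ω k) (ω (k + 1)))
                = Set.indicator {ω : ℕ → S | ω 0 = a ∧ (∀ j : ℕ, m ≤ j → ω (j + 1) = ω j) ∧ Ew w ω}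
                    (fun ω => ∏ k ∈ Finset.range m, T (ω k) (ω (k + 1))) ω :=
                  (Set.indicator_of_mem hmem
                    (fun ω => ∏ k ∈ Finset.range m, T (ω k) (ω (k + 1)))).symm
              _ ≤ _ := Finset.single_le_sum
                  (f := fun w => Set.indicator
                    {ω : ℕ → S | ω 0 = a ∧ (∀ j : ℕ, m ≤ j → ω (j + 1) = ω j) ∧ Ew w ω}
                    (fun ω => ∏ k ∈ Finset.range m, T (ω k) (ω (k + 1))) ω)
                  (fun w _ => zero_le) hwW
        · rw [Set.indicator_of_notMem hω]
          exact zero_le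
    _ = ∑ w ∈ W, ∑' ω : ℕ → S,
          Set.indicator {ω : ℕ → S | ω 0 = a ∧ (∀ j : ℕ, m ≤ j → ω (j + 1) = ω j) ∧ Ew w ω}
            (fun ω => ∏ k ∈ Finset.range m, T (ω k) (ω (k + 1))) ω := Summable.tsum_finsetSum hsum
    _ = ∑ w ∈ W, pathProb T a m (Ew w) := by
        apply Finset.sum_congr rfl
        intro w _
        rw [hrw]

lemma trace_back {p q : ℝ} {m : ℕ} (ω : ℕ → ℕ →₀ ℕ)
    (hcons : ∀ i, i < m → solTrans p q (ω i) (ω (i + 1)) ≠ 0) :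
    ∀ (t k j : ℕ), t ≤ k → t ≤ j → k ≤ m → (ω k) j ≤ (ω (k - t)) (j - t) := by
  intro t
  induction t with
  | zero => intro k j _ _ _; simp
  | succ t ih =>
    intro k j htk htj hkm
    have hk1 : k - t = (k - (t+1)) + 1 := by omega
    have hj1 : j - t = (j - (t+1)) + 1 := by omega
    calc (ω k) j ≤ (ω (k - t)) (j - t) := ih k j (by omega) (by omega) hkm
      _ ≤ (ω (k - (t+1))) (j - (t+1)) := by
          rw [hk1, hj1]
          exact (solTrans_cond (hcons (k - (t+1)) (by omega))).1 (j - (t+1))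


set_option maxHeartbeats 2000000 in
lemma final_bound (p q ε : ℝ) (n : ℕ) (hp0 : 0 < p) (hp1 : p ≤ 1) (hq0 : 0 < q) (hq1 : q ≤ 1)
    (hε : 0 < ε) (hn : 3 ≤ n) (a : ℕ →₀ ℕ) (ha : ∑ i ∈ a.support, a i = n)
    (hC : (20 + 20 / ε) * Real.log n ≤ p * q ^ 2 * n) :
    pathProb (solTrans p q) a (⌈14 * Real.log n / (p * q)⌉₊ + ⌈(n : ℝ) ^ 2 / p⌉₊)
      (fun ω => ∃ k : ℕ, ⌈14 * Real.log n / (p * q)⌉₊ + 1 ≤ k ∧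
        k ≤ ⌈14 * Real.log n / (p * q)⌉₊ + ⌈(n : ℝ) ^ 2 / p⌉₊ ∧
        ε * (q * n) < (numParts (ω k) : ℝ))
      ≤ ENNReal.ofReal (6 / n) := by
  classical
  set L := Real.log n with hL
  set D := ⌈14 * L / (p * q)⌉₊ with hD
  set M := ⌈(n : ℝ) ^ 2 / p⌉₊ with hM
  set m := D + M with hm
  have hn0 : (0:ℝ) < n := by exact_mod_cast (by omega : 0 < n)
  have hn1 : (1:ℝ) ≤ n := by exact_mod_cast (by omega : 1 ≤ n)
  have hlog1 : 1 ≤ L := by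
    rw [hL]
    have h3 : Real.exp 1 ≤ (n:ℝ) := by
      have := Real.exp_one_lt_d9
      have h3' : (3:ℝ) ≤ n := by exact_mod_cast hn
      nlinarith
    calc (1:ℝ) = Real.log (Real.exp 1) := (Real.log_exp 1).symm
      _ ≤ Real.log n := Real.log_le_log (Real.exp_pos 1) h3
  have hpq : 0 < p * q := mul_pos hp0 hq0
  have hpq1 : p * q ≤ 1 := mul_le_one₀ hp1 hq0.le hq1
  have hq2 : p * q ^ 2 ≤ p * q := by nlinarith
  have hC20 : 20 * L ≤ p * q ^ 2 * n := by
    have h20 : 0 < 20 / ε := by positivity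
    nlinarith
  have hεterm : 20 * L ≤ ε * (p * q ^ 2 * n) := by
    have hd : ε * (20 / ε) = 20 := mul_div_cancel₀ 20 (ne_of_gt hε)
    have := mul_le_mul_of_nonneg_left hC hε.le
    nlinarith [mul_pos hε (lt_of_lt_of_le one_pos hlog1)]
  -- size bounds for D, M, m
  have hD_nat : D ≤ n := by
    rw [hD]
    apply Nat.ceil_le.mpr
    rw [div_le_iff₀ hpq]
    nlinarith
  have hM_nat : M ≤ n ^ 3 := by
    rw [hM]
    apply Nat.ceil_le.mpr
    rw [div_le_iff₀ hp0]
    have hc3 : ((n ^ 3 : ℕ) : ℝ) = (n:ℝ)^3 := by push_cast; ring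
    rw [hc3]
    nlinarith
  have hm_nat : m ≤ 2 * n ^ 3 := by
    have hn3 : n ≤ n ^ 3 := Nat.le_self_pow (by omega) n
    omega
  set c := ENNReal.ofReal (1 - p * q) with hc
  set J := ⌈ε * (q * n)⌉₊ - 1 with hJ
  set t₀ := min J (D + 1) with ht0
  set W := (Finset.Icc (D + 1) m).biUnion (fun k =>
    ((Finset.range k ∪ a.support.image (· + k)).filter
      (fun j : ℕ => ε * (q * (n:ℝ)) < (j : ℝ) + 1)).image (fun j => (k, j))) with hW
  have hεqn : 0 < ε * (q * n) := by positivity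
  -- union bound
  have hUnion := pathProb_union (solTrans p q) a m
    (fun ω => ∃ k : ℕ, D + 1 ≤ k ∧ k ≤ m ∧ ε * (q * n) < (numParts (ω k) : ℝ))
    W (fun w ω => 1 ≤ (ω w.1) w.2) ?hwit
  case hwit =>
    intro ω h0 hfr hE hprod
    obtain ⟨k, hk1, hk2, hk3⟩ := hE
    have hcons : ∀ i, i < m → solTrans p q (ω i) (ω (i + 1)) ≠ 0 := by
      intro i hi hzero
      exact hprod (Finset.prod_eq_zero (Finset.mem_range.mpr hi) hzero)
    have hsup : (ω k).support.Nonempty := by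
      rw [Finset.nonempty_iff_ne_empty]
      intro hemp
      rw [numParts, hemp, Finset.sup_empty] at hk3
      have hk3' : ε * (q * (n:ℝ)) < 0 := by simpa using hk3
      linarith
    obtain ⟨j, hjsup, hjeq⟩ := Finset.exists_mem_eq_sup (ω k).support hsup (fun j => j + 1)
    have hj1 : 1 ≤ (ω k) j := Nat.one_le_iff_ne_zero.mpr (Finsupp.mem_support_iff.mp hjsup)
    have hjε : ε * (q * n) < (j : ℝ) + 1 := by
      rw [numParts, hjeq] at hk3
      exact_mod_cast hk3
    refine ⟨(k, j), ?_, hj1⟩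
    rw [hW, Finset.mem_biUnion]
    refine ⟨k, Finset.mem_Icc.mpr ⟨hk1, hk2⟩, ?_⟩
    rw [Finset.mem_image]
    refine ⟨j, Finset.mem_filter.mpr ⟨?_, hjε⟩, rfl⟩
    rw [Finset.mem_union]
    by_cases hjk : j < k
    · exact Or.inl (Finset.mem_range.mpr hjk)
    · right
      have htr := trace_back ω hcons k k j (le_refl k) (by omega) hk2
      rw [Nat.sub_self, h0] at htr
      rw [Finset.mem_image]
      refine ⟨j - k, Finsupp.mem_support_iff.mpr (by omega), by show j - k + k = j; omega⟩
  refine le_trans hUnion ?_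
  -- each witness bound
  have hW2 : ∀ w ∈ W, pathProb (solTrans p q) a m (fun ω => 1 ≤ (ω w.1) w.2)
      ≤ c ^ t₀ * (n : ENNReal) := by
    intro w hw
    rw [hW, Finset.mem_biUnion] at hw
    obtain ⟨k, hk, hw⟩ := hw
    rw [Finset.mem_image] at hw
    obtain ⟨j, hj, rfl⟩ := hw
    rw [Finset.mem_filter] at hj
    rw [Finset.mem_Icc] at hk
    refine le_trans (witness_bound hp0 hp1 hq0 hq1 n k j m hk.2 a ha) (mul_le_mul_left ?_ _)
    have hcle : c ≤ 1 := by
      rw [hc]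
      exact ENNReal.ofReal_le_one.mpr (by nlinarith)
    have hjJ : J ≤ j := by
      have hcj : ⌈ε * (q * n)⌉₊ ≤ j + 1 := by
        apply Nat.ceil_le.mpr
        push_cast
        exact le_of_lt hj.2
      omega
    have hmin : t₀ ≤ min j k := le_min (le_trans (min_le_left _ _) hjJ)
      (le_trans (min_le_right _ _) hk.1)
    calc c ^ min j k = c ^ t₀ * c ^ (min j k - t₀) := by
          rw [← pow_add]
          congr 1
          omega
      _ ≤ c ^ t₀ * 1 := mul_le_mul_right (pow_le_one' hcle _) _
      _ = c ^ t₀ := mul_one _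
  refine le_trans (Finset.sum_le_card_nsmul W _ _ hW2) ?_
  -- card bound
  have hcard : W.card ≤ 6 * n ^ 6 := by
    have hsupcard : a.support.card ≤ n := by
      calc a.support.card = ∑ _i ∈ a.support, 1 := (Finset.card_eq_sum_ones _)
        _ ≤ ∑ i ∈ a.support, a i := Finset.sum_le_sum (fun i hi =>
            Nat.one_le_iff_ne_zero.mpr (Finsupp.mem_support_iff.mp hi))
        _ = n := ha
    have h1 : W.card ≤ ∑ k ∈ Finset.Icc (D + 1) m,
        (((Finset.range k ∪ a.support.image (· + k)).filter
          (fun j : ℕ => ε * (q * (n:ℝ)) < (j : ℝ) + 1)).image (fun j => (k, j))).card :=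
      Finset.card_biUnion_le
    have h2 : ∀ k ∈ Finset.Icc (D + 1) m,
        (((Finset.range k ∪ a.support.image (· + k)).filter
          (fun j : ℕ => ε * (q * (n:ℝ)) < (j : ℝ) + 1)).image (fun j => (k, j))).card ≤ m + n := by
      intro k hk
      rw [Finset.mem_Icc] at hk
      refine le_trans Finset.card_image_le (le_trans (Finset.card_filter_le _ _)
        (le_trans (Finset.card_union_le _ _) ?_))
      have h3 := Finset.card_image_le (s := a.support) (f := (· + k))
      rw [Finset.card_range]
      omega
    calc W.card ≤ ∑ k ∈ Finset.Icc (D + 1) m, (m + n) := le_trans h1 (Finset.sum_le_sum h2)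
      _ = (Finset.Icc (D + 1) m).card * (m + n) := by rw [Finset.sum_const, smul_eq_mul]
      _ ≤ m * (m + n) := by
          have : (Finset.Icc (D + 1) m).card ≤ m := by
            rw [Nat.card_Icc]
            omega
          exact Nat.mul_le_mul_right _ this
      _ ≤ 6 * n ^ 6 := by
          have hn3 : n ≤ n ^ 3 := Nat.le_self_pow (by omega) n
          have h63 : n ^ 3 * n ^ 3 = n ^ 6 := by ring
          nlinarith [hm_nat]
  -- exponential bound
  have hct : c ^ t₀ ≤ ENNReal.ofReal (Real.exp (-(14 * L))) := by
    have h1mpq : (0:ℝ) ≤ 1 - p * q := by linarith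
    rw [hc, ← ENNReal.ofReal_pow h1mpq]
    apply ENNReal.ofReal_le_ofReal
    have hexp1 : 1 - p * q ≤ Real.exp (-(p * q)) := by
      have := Real.add_one_le_exp (-(p * q))
      linarith
    calc (1 - p * q) ^ t₀ ≤ (Real.exp (-(p * q))) ^ t₀ := pow_le_pow_left₀ h1mpq hexp1 t₀
      _ = Real.exp (-(p * q) * t₀) := by
          rw [← Real.exp_nat_mul]
          congr 1
          ring
      _ ≤ Real.exp (-(14 * L)) := by
          apply Real.exp_le_exp.mpr
          have hgoal : 14 * L ≤ p * q * t₀ := by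
            have htc : (t₀ : ℝ) = min (J : ℝ) ((D:ℝ) + 1) := by
              rw [ht0]
              push_cast [Nat.cast_min]
              rfl
            have hcase : 14 * L ≤ p * q * J ∧ 14 * L ≤ p * q * ((D:ℝ) + 1) := by
              constructor
              · -- via epsilon
                have hceil1 : 1 ≤ ⌈ε * (q * n)⌉₊ := Nat.one_le_ceil_iff.mpr hεqn
                have hJc : (J : ℝ) ≥ ε * (q * n) - 1 := by
                  rw [hJ]
                  have : ((⌈ε * (q * n)⌉₊ - 1 : ℕ) : ℝ) = (⌈ε * (q * n)⌉₊ : ℝ) - 1 := by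
                    push_cast [Nat.cast_sub hceil1]
                    ring
                  rw [this]
                  have := Nat.le_ceil (ε * (q * n))
                  linarith
                have hkey : p * q * (ε * (q * n)) = ε * (p * q ^ 2 * n) := by ring
                nlinarith
              · -- via D
                have hDge : 14 * L / (p * q) ≤ (D : ℝ) := Nat.le_ceil _
                rw [div_le_iff₀ hpq] at hDge
                nlinarith
            rw [htc]
            rcases le_total (J : ℝ) ((D:ℝ) + 1) with h | h
            · rw [min_eq_left h]; exact hcase.1
            · rw [min_eq_right h]; exact hcase.2
          linarith
  -- assemble
  calc W.card • (c ^ t₀ * (n : ENNReal))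
      = (W.card : ENNReal) * (c ^ t₀ * (n : ENNReal)) := nsmul_eq_mul _ _
    _ ≤ ((6 * n ^ 6 : ℕ) : ENNReal) * (ENNReal.ofReal (Real.exp (-(14 * L))) * (n : ENNReal)) :=
        mul_le_mul' (Nat.cast_le.mpr hcard) (mul_le_mul_left hct _)
    _ = ENNReal.ofReal (((6 * n ^ 6 : ℕ) : ℝ) * (Real.exp (-(14 * L)) * (n : ℝ))) := by
        rw [ENNReal.ofReal_mul (by positivity), ENNReal.ofReal_mul (Real.exp_nonneg _)]
        rw [ENNReal.ofReal_natCast, ENNReal.ofReal_natCast]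
    _ ≤ ENNReal.ofReal (6 / n) := by
        apply ENNReal.ofReal_le_ofReal
        have hexp : Real.exp (-(14 * L)) = (((n:ℝ)) ^ (14:ℕ))⁻¹ := by
          have h14 : -(14 * L) = ((14:ℕ) : ℝ) * (-L) := by push_cast; ring
          rw [h14, Real.exp_nat_mul, Real.exp_neg, hL, Real.exp_log hn0, inv_pow]
        have final : ((6 * n ^ 6 : ℕ) : ℝ) * ((((n:ℝ)) ^ (14:ℕ))⁻¹ * (n : ℝ)) ≤ 6 / n := by
          have e1 : ((6 * n ^ 6 : ℕ) : ℝ) * ((((n:ℝ)) ^ (14:ℕ))⁻¹ * (n : ℝ))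
              = 6 * (n:ℝ) ^ (7:ℕ) / (n:ℝ) ^ (14:ℕ) := by
            push_cast
            field_simp
          rw [e1, div_le_div_iff₀ (by positivity) hn0]
          have hple := pow_le_pow_right₀ hn1 (by norm_num : 8 ≤ 14)
          have h78 : (n:ℝ) ^ (7:ℕ) * n = (n:ℝ) ^ (8:ℕ) := by ring
          nlinarith
        rw [hexp]
        exact final

end Aux

theorem stmt5 (p q : ℕ → ℝ)
    (hp : ∀ n : ℕ, 2 ≤ n → 0 < p n ∧ p n ≤ 1) (hq : ∀ n : ℕ, 2 ≤ n → 0 < q n ∧ q n ≤ 1)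
    (hinf : Tendsto (fun n : ℕ => p n * (q n) ^ 2 * n / Real.log n) atTop atTop)
    (α0 : (n : ℕ) → ℕ →₀ ℕ) (hα0 : ∀ n : ℕ, 2 ≤ n → IsWeakComp n (α0 n)) :
    -- (1/(qₙn))·max{N(alpha^(D+1)),...,N(alpha^(D+M))} → 0 in probability, with
    -- D = ⌈14·log n/(pₙqₙ)⌉ and M = ⌈n²/pₙ⌉:
    ∀ ε : ℝ, 0 < ε →
      Tendsto (fun n : ℕ =>
          pathProb (solTrans (p n) (q n)) (α0 n)
            (⌈14 * Real.log n / (p n * q n)⌉₊ + ⌈(n : ℝ) ^ 2 / p n⌉₊)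
            (fun ω => ∃ k : ℕ, ⌈14 * Real.log n / (p n * q n)⌉₊ + 1 ≤ k ∧
              k ≤ ⌈14 * Real.log n / (p n * q n)⌉₊ + ⌈(n : ℝ) ^ 2 / p n⌉₊ ∧
              ε * (q n * n) < (numParts (ω k) : ℝ)))
        atTop (nhds 0) := by
  intro ε hε
  have hup : ∀ᶠ n : ℕ in atTop,
      pathProb (solTrans (p n) (q n)) (α0 n)
          (⌈14 * Real.log n / (p n * q n)⌉₊ + ⌈(n : ℝ) ^ 2 / p n⌉₊)
          (fun ω => ∃ k : ℕ, ⌈14 * Real.log n / (p n * q n)⌉₊ + 1 ≤ k ∧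
            k ≤ ⌈14 * Real.log n / (p n * q n)⌉₊ + ⌈(n : ℝ) ^ 2 / p n⌉₊ ∧
            ε * (q n * n) < (numParts (ω k) : ℝ))
        ≤ ENNReal.ofReal (6 / n) := by
    filter_upwards [hinf.eventually_ge_atTop (20 + 20 / ε), eventually_ge_atTop 3] with n hC hn3
    have hlog : 0 < Real.log n := Real.log_pos (by exact_mod_cast (by omega : 1 < n))
    have hC' : (20 + 20 / ε) * Real.log n ≤ p n * q n ^ 2 * n := by
      rw [le_div_iff₀ hlog] at hC
      exact hC
    exact final_bound (p n) (q n) ε n (hp n (by omega)).1 (hp n (by omega)).2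
      (hq n (by omega)).1 (hq n (by omega)).2 hε hn3 (α0 n) (hα0 n (by omega)) hC'
  have hzero : Tendsto (fun n : ℕ => ENNReal.ofReal (6 / n)) atTop (nhds 0) := by
    have : Tendsto (fun n : ℕ => (6 / n : ℝ)) atTop (nhds 0) :=
      tendsto_const_div_atTop_nhds_zero_nat 6
    simpa using ENNReal.tendsto_ofReal this
  exact tendsto_of_tendsto_of_tendsto_of_le_of_le' tendsto_const_nhds hzero
    (Eventually.of_forall (fun n => zero_le)) hup
end

section
/- For each n ≥ 2 let 0 < p_n ≤ 1 and 0 < q_n ≤ 1 with p_n·q_n²·n/log n → ∞ as n → ∞, let α^{(0)} = α^{(0,n)} ∈ W(n) be an arbitrary initial configuration, and let (α^{(k)})_{k≥0} be the Markov chain B(n,p_n,q_n) started at α^{(0)}. Set D = ⌈14·log n/(p_n·q_n)⌉ and M = ⌈n²/p_n⌉. Then max_{D+1 ≤ k ≤ D+M} |α^{(k)}₁ − p_n·q_n·n| / (p_n·q_n·n) → 0 in probability as n → ∞, where α^{(k)}₁ denotes the size of the new pile created at move k. -/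
open Filter

namespace BS
open Finset
open scoped Classical

noncomputable def ind (P : Prop) : ENNReal := if P then 1 else 0
lemma ind_le_one (P : Prop) : ind P ≤ 1 := by unfold ind; split <;> simp
lemma ind_of {P : Prop} (h : P) : ind P = 1 := if_pos h
lemma ind_of_not {P : Prop} (h : ¬P) : ind P = 0 := if_neg h


lemma real_binom_weighted (p r : ℝ) (m M : ℕ) (h : m ≤ M) :
    ∑ y ∈ range (M+1), (m.choose y : ℝ) * p^y * (1-p)^(m-y) * r^y = (1-p+p*r)^m := by
  have htr : ∑ y ∈ range (M+1), (m.choose y : ℝ) * p^y * (1-p)^(m-y) * r^y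
      = ∑ y ∈ range (m+1), (m.choose y : ℝ) * p^y * (1-p)^(m-y) * r^y := by
    refine (Finset.sum_subset (by simp [Finset.range_subset]; omega) ?_).symm
    intro y _ hy
    simp only [Finset.mem_range, not_lt] at hy
    have : m.choose y = 0 := Nat.choose_eq_zero_of_lt (by omega)
    simp [this]
  rw [htr]
  have hb := add_pow (p*r) (1-p) m
  rw [show p*r + (1-p) = 1-p+p*r by ring] at hb
  rw [hb]
  refine Finset.sum_congr rfl ?_
  intro y _
  ring

lemma real_binom_sum (p : ℝ) (m M : ℕ) (h : m ≤ M) :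
    ∑ y ∈ range (M+1), (m.choose y : ℝ) * p^y * (1-p)^(m-y) = 1 := by
  have h1 := real_binom_weighted p 1 m M h
  have h2 : ∑ y ∈ range (M+1), (m.choose y : ℝ) * p^y * (1-p)^(m-y)
      = ∑ y ∈ range (M+1), (m.choose y : ℝ) * p^y * (1-p)^(m-y) * 1^y := by
    refine Finset.sum_congr rfl fun y _ => by rw [one_pow, mul_one]
  rw [h2, h1]
  norm_num

lemma real_binom_mean (p : ℝ) (m M : ℕ) (h : m ≤ M) :
    ∑ y ∈ range (M+1), (m.choose y : ℝ) * p^y * (1-p)^(m-y) * y = m * p := by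
  have htr : ∑ y ∈ range (M+1), (m.choose y : ℝ) * p^y * (1-p)^(m-y) * y
      = ∑ y ∈ range (m+1), (m.choose y : ℝ) * p^y * (1-p)^(m-y) * y := by
    refine (Finset.sum_subset (by simp [Finset.range_subset]; omega) ?_).symm
    intro y _ hy
    simp only [Finset.mem_range, not_lt] at hy
    have : m.choose y = 0 := Nat.choose_eq_zero_of_lt (by omega)
    simp [this]
  rw [htr]
  cases m with
  | zero => simp
  | succ m' =>
    rw [Finset.sum_range_succ']
    have key : ∀ y' : ℕ, ((m'+1).choose (y'+1) : ℝ) * (y'+1) = (m'+1) * m'.choose y' := by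
      intro y'
      have h0 : (m'+1) * m'.choose y' = (m'+1).choose (y'+1) * (y'+1) := Nat.add_one_mul_choose_eq m' y'
      exact_mod_cast congrArg (Nat.cast (R := ℝ)) h0.symm
    have hcg : ∀ y' ∈ range (m'+1),
        ((m'+1).choose (y'+1) : ℝ) * p^(y'+1) * (1-p)^(m'+1-(y'+1)) * ((y' : ℝ)+1)
        = ((m'+1) * p) * ((m'.choose y' : ℝ) * p^y' * (1-p)^(m'-y')) := by
      intro y' _
      have h1 : m'+1-(y'+1) = m'-y' := by omega
      rw [h1]
      linear_combination (p^(y'+1) * (1-p)^(m'-y')) * key y'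
    have hsum : ∑ y' ∈ range (m'+1),
        ((m'+1).choose (y'+1) : ℝ) * p^(y'+1) * (1-p)^(m'+1-(y'+1)) * ((y':ℝ)+1)
        = ((m'+1) * p) * ∑ y' ∈ range (m'+1), (m'.choose y' : ℝ) * p^y' * (1-p)^(m'-y') := by
      rw [Finset.mul_sum]
      exact Finset.sum_congr rfl hcg
    push_cast
    push_cast at hsum
    rw [hsum, real_binom_sum p m' m' le_rfl]
    ring




variable {p : ℝ}

lemma bterm_nonneg (hp0 : 0 ≤ p) (hp1 : p ≤ 1) (m y : ℕ) :
    0 ≤ (m.choose y : ℝ) * p^y * (1-p)^(m-y) := by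
  have h1 : (0:ℝ) ≤ 1 - p := by linarith
  positivity

lemma bpmf_weighted (hp0 : 0 ≤ p) (hp1 : p ≤ 1) {r : ℝ} (hr : 0 ≤ r) (m M : ℕ) (h : m ≤ M) :
    ∑ y ∈ range (M+1), binomPMF m p y * ENNReal.ofReal (r^y)
      = ENNReal.ofReal ((1-p+p*r)^m) := by
  have : ∀ y ∈ range (M+1), binomPMF m p y * ENNReal.ofReal (r^y)
      = ENNReal.ofReal ((m.choose y : ℝ) * p^y * (1-p)^(m-y) * r^y) := by
    intro y _
    rw [binomPMF, ← ENNReal.ofReal_mul (bterm_nonneg hp0 hp1 m y)]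
  rw [Finset.sum_congr rfl this,
    ← ENNReal.ofReal_sum_of_nonneg (fun y _ => by
      have := bterm_nonneg hp0 hp1 m y
      positivity),
    real_binom_weighted p r m M h]

lemma bpmf_sum (hp0 : 0 ≤ p) (hp1 : p ≤ 1) (m M : ℕ) (h : m ≤ M) :
    ∑ y ∈ range (M+1), binomPMF m p y = 1 := by
  have h2 : ∀ y ∈ range (M+1), binomPMF m p y = binomPMF m p y * ENNReal.ofReal ((1:ℝ)^y) := by
    intro y _; simp
  rw [Finset.sum_congr rfl h2, bpmf_weighted hp0 hp1 zero_le_one m M h]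
  norm_num

lemma bpmf_mean (hp0 : 0 ≤ p) (hp1 : p ≤ 1) (m M : ℕ) (h : m ≤ M) :
    ∑ y ∈ range (M+1), binomPMF m p y * (y : ENNReal) = ENNReal.ofReal (m * p) := by
  have : ∀ y ∈ range (M+1), binomPMF m p y * (y : ENNReal)
      = ENNReal.ofReal ((m.choose y : ℝ) * p^y * (1-p)^(m-y) * y) := by
    intro y _
    rw [binomPMF, ← ENNReal.ofReal_natCast y, ← ENNReal.ofReal_mul (bterm_nonneg hp0 hp1 m y)]
  rw [Finset.sum_congr rfl this,
    ← ENNReal.ofReal_sum_of_nonneg (fun y _ => by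
      have := bterm_nonneg hp0 hp1 m y
      positivity),
    real_binom_mean p m M h]



open scoped Classical



variable (x : ℕ →₀ ℕ)

noncomputable def mkState (Y : {i // i ∈ x.support} → ℕ) : ℕ →₀ ℕ :=
  Finsupp.single 0 (∑ i, Y i) +
    ∑ i : {i // i ∈ x.support}, Finsupp.single ((i : ℕ) + 1) (x i - Y i)

lemma mkState_zero (Y : {i // i ∈ x.support} → ℕ) : mkState x Y 0 = ∑ i, Y i := by
  rw [mkState, Finsupp.add_apply, Finsupp.finset_sum_apply]
  simp [Finsupp.single_apply]

lemma mkState_succ_mem (Y : {i // i ∈ x.support} → ℕ) (i : {i // i ∈ x.support}) :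
    mkState x Y ((i : ℕ) + 1) = x i - Y i := by
  rw [mkState, Finsupp.add_apply, Finsupp.finset_sum_apply]
  rw [Finsupp.single_apply, if_neg (by omega)]
  rw [Finset.sum_eq_single i (fun i' _ hne => by
        rw [Finsupp.single_apply, if_neg]
        intro hc
        exact hne (Subtype.ext (by omega)))
      (fun h => absurd (Finset.mem_univ i) h)]
  simp [Finsupp.single_apply]

lemma mkState_succ_not (Y : {i // i ∈ x.support} → ℕ) (j : ℕ) (hj : j ∉ x.support) :
    mkState x Y (j + 1) = 0 := by
  rw [mkState, Finsupp.add_apply, Finsupp.finset_sum_apply]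
  rw [Finsupp.single_apply, if_neg (by omega)]
  rw [Finset.sum_eq_zero, add_zero]
  intro i' _
  rw [Finsupp.single_apply, if_neg]
  intro hc
  exact hj (by
    have h2 : (↑i' : ℕ) = j := by omega
    rw [← h2]; exact i'.2)

variable (p q : ℝ)

noncomputable def PF : Finset ({i // i ∈ x.support} → ℕ) :=
  Fintype.piFinset (fun i => Finset.range (x i + 1))

lemma mem_PF {Y : {i // i ∈ x.support} → ℕ} (h : Y ∈ PF x) (i : {i // i ∈ x.support}) :
    Y i ≤ x i := by
  have := Fintype.mem_piFinset.mp h i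
  simp only [Finset.mem_range] at this
  omega

lemma solTrans_mkState {Y : {i // i ∈ x.support} → ℕ} (hY : Y ∈ PF x) :
    solTrans p q x (mkState x Y)
      = ∏ i : {i // i ∈ x.support}, binomPMF ⌈q * (x i : ℝ)⌉₊ p (Y i) := by
  rw [solTrans, if_pos]
  · rw [Finset.univ_eq_attach,
      ← Finset.prod_attach x.support
        (fun i => binomPMF ⌈q * (x i : ℝ)⌉₊ p (x i - mkState x Y (i + 1)))]
    refine Finset.prod_congr rfl fun i _ => ?_
    rw [mkState_succ_mem, Nat.sub_sub_self (mem_PF x hY i)]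
  · constructor
    · intro i
      by_cases hi : i ∈ x.support
      · rw [mkState_succ_mem x Y ⟨i, hi⟩]
        exact Nat.sub_le _ _
      · rw [mkState_succ_not x Y i hi]
        exact Nat.zero_le _
    · rw [mkState_zero,
        ← Finset.sum_attach x.support (fun i => x i - mkState x Y (i + 1)),
        Finset.univ_eq_attach]
      refine Finset.sum_congr rfl fun i _ => ?_
      rw [mkState_succ_mem, Nat.sub_sub_self (mem_PF x hY i)]

lemma eq_mkState {b : ℕ →₀ ℕ} (hne : solTrans p q x b ≠ 0) :
    ∃ Y ∈ PF x, b = mkState x Y := by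
  have hcond : (∀ i, b (i + 1) ≤ x i) ∧ b 0 = ∑ i ∈ x.support, (x i - b (i + 1)) := by
    by_contra hc
    exact hne (by rw [solTrans, if_neg hc])
  refine ⟨fun i => x i - b ((i : ℕ) + 1), ?_, ?_⟩
  · rw [PF, Fintype.mem_piFinset]
    intro i
    rw [Finset.mem_range]
    omega
  · ext j
    cases j with
    | zero =>
      rw [mkState_zero, hcond.2, Finset.univ_eq_attach,
        ← Finset.sum_attach x.support (fun i => x i - b (i + 1))]
    | succ j' =>
      by_cases hj : j' ∈ x.support
      · rw [mkState_succ_mem x _ ⟨j', hj⟩, Nat.sub_sub_self (hcond.1 j')]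
      · rw [mkState_succ_not x _ j' hj]
        have h3 : x j' = 0 := Finsupp.notMem_support_iff.mp hj
        have h4 := hcond.1 j'
        omega

lemma mkState_inj {Y Y' : {i // i ∈ x.support} → ℕ} (hY : Y ∈ PF x) (hY' : Y' ∈ PF x)
    (h : mkState x Y = mkState x Y') : Y = Y' := by
  funext i
  have h1 := mkState_succ_mem x Y i
  have h2 := mkState_succ_mem x Y' i
  rw [h] at h1
  have h3 := mem_PF x hY i
  have h4 := mem_PF x hY' i
  omega

lemma kernel_master (f : (ℕ →₀ ℕ) → ENNReal) :
    ∑' b : ℕ →₀ ℕ, solTrans p q x b * f b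
      = ∑ Y ∈ PF x,
          (∏ i : {i // i ∈ x.support}, binomPMF ⌈q * (x i : ℝ)⌉₊ p (Y i)) * f (mkState x Y) := by
  rw [tsum_eq_sum (s := (PF x).image (mkState x)) (fun b hb => by
    rcases eq_or_ne (solTrans p q x b) 0 with h | h
    · rw [h, zero_mul]
    · obtain ⟨Y, hY, rfl⟩ := eq_mkState x p q h
      exact absurd (Finset.mem_image_of_mem _ hY) hb)]
  rw [Finset.sum_image (fun Y hY Y' hY' h => mkState_inj x hY hY' h)]
  refine Finset.sum_congr rfl fun Y hY => ?_
  rw [solTrans_mkState x p q hY]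

variable {p q}

lemma ceil_le_self (hq1 : q ≤ 1) (i : ℕ) : ⌈q * (i : ℝ)⌉₊ ≤ i :=
  Nat.ceil_le.mpr (mul_le_of_le_one_left (Nat.cast_nonneg i) hq1)


lemma solTrans_rowsum (hp0 : 0 ≤ p) (hp1 : p ≤ 1) (hq1 : q ≤ 1) :
    ∑' b : ℕ →₀ ℕ, solTrans p q x b = 1 := by
  have h0 : ∑' b : ℕ →₀ ℕ, solTrans p q x b
      = ∑' b : ℕ →₀ ℕ, solTrans p q x b * (fun _ : ℕ →₀ ℕ => (1:ENNReal)) b := by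
    simp
  rw [h0, kernel_master]
  simp only [mul_one]
  calc ∑ Y ∈ PF x, ∏ i : {i // i ∈ x.support}, binomPMF ⌈q * (x i : ℝ)⌉₊ p (Y i)
      = ∏ i : {i // i ∈ x.support},
          ∑ y ∈ Finset.range (x i + 1), binomPMF ⌈q * (x i : ℝ)⌉₊ p y :=
        (Finset.prod_univ_sum (fun i : {i // i ∈ x.support} => Finset.range (x i + 1))
          (fun i y => binomPMF ⌈q * (x i : ℝ)⌉₊ p y)).symm
    _ = 1 := Finset.prod_eq_one
          (fun i _ => bpmf_sum hp0 hp1 _ _ (ceil_le_self hq1 (x (i:ℕ))))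

lemma piFinset_factor {ι : Type*} [Fintype ι] [DecidableEq ι] (t : ι → Finset ℕ)
    (g : ι → ℕ → ENNReal) (h : ℕ → ENNReal) (j : ι) :
    ∑ Y ∈ Fintype.piFinset t, (∏ i, g i (Y i)) * h (Y j)
      = (∑ y ∈ t j, g j y * h y) * ∏ i ∈ Finset.univ.erase j, ∑ y ∈ t i, g i y := by
  have key : ∀ Y : ι → ℕ,
      (∏ i, g i (Y i)) * h (Y j)
        = ∏ i, (fun i y => if i = j then g i y * h y else g i y) i (Y i) := by
    intro Y
    simp only []
    rw [← Finset.mul_prod_erase Finset.univ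
        (fun i => if i = j then g i (Y i) * h (Y i) else g i (Y i)) (Finset.mem_univ j),
      ← Finset.mul_prod_erase Finset.univ (fun i => g i (Y i)) (Finset.mem_univ j)]
    rw [if_pos rfl]
    rw [Finset.prod_congr rfl (fun i hi => if_neg (Finset.ne_of_mem_erase hi))]
    ring
  calc ∑ Y ∈ Fintype.piFinset t, (∏ i, g i (Y i)) * h (Y j)
      = ∑ Y ∈ Fintype.piFinset t,
          ∏ i, (fun i y => if i = j then g i y * h y else g i y) i (Y i) :=
        Finset.sum_congr rfl (fun Y _ => key Y)
    _ = ∏ i, ∑ y ∈ t i, (fun i y => if i = j then g i y * h y else g i y) i y :=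
        (Finset.prod_univ_sum t (fun i y => if i = j then g i y * h y else g i y)).symm
    _ = (∑ y ∈ t j, g j y * h y) * ∏ i ∈ Finset.univ.erase j, ∑ y ∈ t i, g i y := by
        rw [← Finset.mul_prod_erase Finset.univ
          (fun i => ∑ y ∈ t i, (fun i y => if i = j then g i y * h y else g i y) i y)
          (Finset.mem_univ j)]
        simp only [if_pos rfl]
        congr 1
        refine Finset.prod_congr rfl fun i hi => Finset.sum_congr rfl fun y _ => ?_
        simp only [if_neg (Finset.ne_of_mem_erase hi)]

lemma solTrans_exp_step (hp0 : 0 ≤ p) (hp1 : p ≤ 1) (hq0 : 0 ≤ q) (hq1 : q ≤ 1) (j : ℕ) :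
    ∑' b : ℕ →₀ ℕ, solTrans p q x b * (b (j+1) : ENNReal)
      ≤ ENNReal.ofReal (1 - p*q) * (x j : ENNReal) := by
  rw [kernel_master x p q (fun b => (b (j+1) : ENNReal))]
  by_cases hj : j ∈ x.support
  · have hrw : ∀ Y ∈ PF x,
        (∏ i : {i // i ∈ x.support}, binomPMF ⌈q * (x i : ℝ)⌉₊ p (Y i))
            * ((mkState x Y (j+1) : ℕ) : ENNReal)
          = (∏ i : {i // i ∈ x.support}, binomPMF ⌈q * (x i : ℝ)⌉₊ p (Y i))
            * ((x j - Y ⟨j, hj⟩ : ℕ) : ENNReal) := by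
      intro Y _
      rw [mkState_succ_mem x Y ⟨j, hj⟩]
    rw [Finset.sum_congr rfl hrw]
    have hfac := piFinset_factor
      (fun i : {i // i ∈ x.support} => Finset.range (x i + 1))
      (fun i y => binomPMF ⌈q * (x i : ℝ)⌉₊ p y)
      (fun y => ((x j - y : ℕ) : ENNReal)) ⟨j, hj⟩
    rw [PF] at *
    rw [hfac]
    have hone : (∏ i ∈ Finset.univ.erase (⟨j, hj⟩ : {i // i ∈ x.support}),
        ∑ y ∈ Finset.range (x i + 1), binomPMF ⌈q * (x i : ℝ)⌉₊ p y) = 1 :=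
      Finset.prod_eq_one
        (fun i _ => bpmf_sum hp0 hp1 _ _ (ceil_le_self hq1 (x (i:ℕ))))
    rw [hone, mul_one]
    set m := ⌈q * (x j : ℝ)⌉₊ with hm
    have hterm : ∀ y ∈ Finset.range (x j + 1),
        binomPMF m p y * ((x j - y : ℕ) : ENNReal)
          = ENNReal.ofReal (((m.choose y : ℝ) * p^y * (1-p)^(m-y)) * ((x j : ℝ) - y)) := by
      intro y hy
      rw [Finset.mem_range] at hy
      rw [binomPMF, ← ENNReal.ofReal_natCast ((x j : ℕ) - y), Nat.cast_sub (by omega),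
        ← ENNReal.ofReal_mul (bterm_nonneg hp0 hp1 m y)]
    rw [Finset.sum_congr rfl hterm,
      ← ENNReal.ofReal_sum_of_nonneg (fun y hy => by
        rw [Finset.mem_range] at hy
        have h5 := bterm_nonneg hp0 hp1 m y
        have h6 : (0:ℝ) ≤ (x j : ℝ) - y := by
          have : (y:ℝ) ≤ (x j : ℝ) := by exact_mod_cast Nat.le_of_lt_succ hy
          linarith
        exact mul_nonneg h5 h6)]
    have hsum : ∑ y ∈ Finset.range (x j + 1),
        ((m.choose y : ℝ) * p^y * (1-p)^(m-y)) * ((x j : ℝ) - y)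
        = (x j : ℝ) - m * p := by
      have e1 : ∑ y ∈ Finset.range (x j + 1),
          ((m.choose y : ℝ) * p^y * (1-p)^(m-y)) * ((x j : ℝ) - y)
          = (x j : ℝ) * (∑ y ∈ Finset.range (x j + 1), (m.choose y : ℝ) * p^y * (1-p)^(m-y))
            - ∑ y ∈ Finset.range (x j + 1), (m.choose y : ℝ) * p^y * (1-p)^(m-y) * y := by
        rw [Finset.mul_sum, ← Finset.sum_sub_distrib]
        exact Finset.sum_congr rfl fun y _ => by ring
      rw [e1, real_binom_sum p m (x j) (ceil_le_self hq1 (x j)),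
        real_binom_mean p m (x j) (ceil_le_self hq1 (x j))]
      ring
    rw [hsum]
    have hle : (x j : ℝ) - m * p ≤ (1 - p*q) * (x j : ℝ) := by
      have h7 : q * (x j : ℝ) ≤ m := Nat.le_ceil _
      nlinarith
    calc ENNReal.ofReal ((x j : ℝ) - m * p)
        ≤ ENNReal.ofReal ((1 - p*q) * (x j : ℝ)) := ENNReal.ofReal_le_ofReal hle
      _ = ENNReal.ofReal (1 - p*q) * (x j : ENNReal) := by
          rw [ENNReal.ofReal_mul (by nlinarith), ENNReal.ofReal_natCast]
  · rw [Finset.sum_eq_zero (fun Y _ => by rw [mkState_succ_not x Y j hj]; simp)]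
    exact zero_le

lemma chernoff_generic (hp0 : 0 ≤ p) (hp1 : p ≤ 1) (hq1 : q ≤ 1)
    {r : ℝ} (hr : 0 ≤ r) (A : ENNReal)
    (f : (ℕ →₀ ℕ) → ENNReal)
    (hf : ∀ Y : {i // i ∈ x.support} → ℕ,
      f (mkState x Y) ≤ A * ∏ i : {i // i ∈ x.support}, ENNReal.ofReal (r ^ (Y i))) :
    ∑' b : ℕ →₀ ℕ, solTrans p q x b * f b
      ≤ A * ENNReal.ofReal ((1 - p + p * r) ^ (∑ i ∈ x.support, ⌈q * (x i : ℝ)⌉₊)) := by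
  have hbase : (0:ℝ) ≤ 1 - p + p * r := by nlinarith
  rw [kernel_master x p q f]
  have step1 : ∑ Y ∈ PF x,
      (∏ i : {i // i ∈ x.support}, binomPMF ⌈q * (x i : ℝ)⌉₊ p (Y i)) * f (mkState x Y)
      ≤ ∑ Y ∈ PF x, A * ∏ i : {i // i ∈ x.support},
          (binomPMF ⌈q * (x i : ℝ)⌉₊ p (Y i) * ENNReal.ofReal (r ^ (Y i))) := by
    refine Finset.sum_le_sum fun Y _ => ?_
    calc (∏ i : {i // i ∈ x.support}, binomPMF ⌈q * (x i : ℝ)⌉₊ p (Y i)) * f (mkState x Y)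
        ≤ (∏ i : {i // i ∈ x.support}, binomPMF ⌈q * (x i : ℝ)⌉₊ p (Y i))
            * (A * ∏ i : {i // i ∈ x.support}, ENNReal.ofReal (r ^ (Y i))) :=
          mul_le_mul_right (hf Y) _
      _ = A * ∏ i : {i // i ∈ x.support},
            (binomPMF ⌈q * (x i : ℝ)⌉₊ p (Y i) * ENNReal.ofReal (r ^ (Y i))) := by
          rw [Finset.prod_mul_distrib]
          ring
  refine le_trans step1 ?_
  rw [← Finset.mul_sum]
  refine mul_le_mul_right (le_of_eq ?_) A
  calc ∑ Y ∈ PF x, ∏ i : {i // i ∈ x.support},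
        (binomPMF ⌈q * (x i : ℝ)⌉₊ p (Y i) * ENNReal.ofReal (r ^ (Y i)))
      = ∏ i : {i // i ∈ x.support}, ∑ y ∈ Finset.range (x i + 1),
          (binomPMF ⌈q * (x i : ℝ)⌉₊ p y * ENNReal.ofReal (r ^ y)) :=
        (Finset.prod_univ_sum (fun i : {i // i ∈ x.support} => Finset.range (x i + 1))
          (fun i y => binomPMF ⌈q * (x i : ℝ)⌉₊ p y * ENNReal.ofReal (r ^ y))).symm
    _ = ∏ i : {i // i ∈ x.support},
          ENNReal.ofReal ((1 - p + p * r) ^ (⌈q * (x i : ℝ)⌉₊)) :=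
        Finset.prod_congr rfl (fun i _ =>
          bpmf_weighted hp0 hp1 hr _ _ (ceil_le_self hq1 (x i)))
    _ = ENNReal.ofReal (∏ i : {i // i ∈ x.support},
          (1 - p + p * r) ^ (⌈q * (x i : ℝ)⌉₊)) :=
        (ENNReal.ofReal_prod_of_nonneg (fun i _ => pow_nonneg hbase _)).symm
    _ = ENNReal.ofReal ((1 - p + p * r) ^ (∑ i ∈ x.support, ⌈q * (x i : ℝ)⌉₊)) := by
        rw [Finset.prod_pow_eq_pow_sum]
        congr 1
        rw [Finset.univ_eq_attach, Finset.sum_attach x.support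
          (fun i => ⌈q * (x i : ℝ)⌉₊)]

lemma ind_le_exp_up {l s : ℝ} (hl : 0 ≤ l) (k : ℝ) :
    ind (s ≤ k) ≤ ENNReal.ofReal (Real.exp (l * k - l * s)) := by
  by_cases hc : s ≤ k
  · rw [ind_of hc]
    exact ENNReal.one_le_ofReal.mpr (Real.one_le_exp (by nlinarith))
  · rw [ind_of_not hc]
    exact zero_le

lemma ind_le_exp_low {l s : ℝ} (hl : 0 ≤ l) (k : ℝ) :
    ind (k ≤ s) ≤ ENNReal.ofReal (Real.exp (l * s - l * k)) := by
  by_cases hc : k ≤ s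
  · rw [ind_of hc]
    exact ENNReal.one_le_ofReal.mpr (Real.one_le_exp (by nlinarith))
  · rw [ind_of_not hc]
    exact zero_le

lemma mk_sum_cast (Y : {i // i ∈ x.support} → ℕ) :
    ((mkState x Y 0 : ℕ) : ℝ) = ∑ i : {i // i ∈ x.support}, (Y i : ℝ) := by
  rw [mkState_zero]
  push_cast
  rfl

lemma solTrans_chernoff_up (hp0 : 0 ≤ p) (hp1 : p ≤ 1) (hq1 : q ≤ 1)
    {l : ℝ} (hl : 0 ≤ l) (s : ℝ) :
    ∑' b : ℕ →₀ ℕ, solTrans p q x b * ind (s ≤ ((b 0 : ℕ) : ℝ))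
      ≤ ENNReal.ofReal (Real.exp (-(l*s))
          * (1 - p + p * Real.exp l) ^ (∑ i ∈ x.support, ⌈q * (x i : ℝ)⌉₊)) := by
  have hkey := chernoff_generic x (r := Real.exp l) hp0 hp1 hq1 (Real.exp_pos l).le
    (ENNReal.ofReal (Real.exp (-(l*s)))) (fun b => ind (s ≤ ((b 0 : ℕ) : ℝ))) ?_
  · refine le_trans hkey (le_of_eq ?_)
    rw [← ENNReal.ofReal_mul (Real.exp_pos _).le]
  · intro Y
    refine le_trans (ind_le_exp_up hl _) (le_of_eq ?_)
    rw [← ENNReal.ofReal_prod_of_nonneg (fun i _ => by positivity),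
      ← ENNReal.ofReal_mul (by positivity)]
    congr 1
    have hp2 : ∏ i : {i // i ∈ x.support}, Real.exp l ^ (Y i)
        = Real.exp (∑ i : {i // i ∈ x.support}, (Y i : ℝ) * l) := by
      rw [Real.exp_sum]
      exact Finset.prod_congr rfl fun i _ => (Real.exp_nat_mul l (Y i)).symm
    rw [hp2, ← Real.exp_add]
    congr 1
    rw [mk_sum_cast, ← Finset.sum_mul]
    ring

lemma solTrans_chernoff_low (hp0 : 0 ≤ p) (hp1 : p ≤ 1) (hq1 : q ≤ 1)
    {l : ℝ} (hl : 0 ≤ l) (s : ℝ) :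
    ∑' b : ℕ →₀ ℕ, solTrans p q x b * ind (((b 0 : ℕ) : ℝ) ≤ s)
      ≤ ENNReal.ofReal (Real.exp (l*s)
          * (1 - p + p * Real.exp (-l)) ^ (∑ i ∈ x.support, ⌈q * (x i : ℝ)⌉₊)) := by
  have hkey := chernoff_generic x (r := Real.exp (-l)) hp0 hp1 hq1 (Real.exp_pos _).le
    (ENNReal.ofReal (Real.exp (l*s))) (fun b => ind (((b 0 : ℕ) : ℝ) ≤ s)) ?_
  · refine le_trans hkey (le_of_eq ?_)
    rw [← ENNReal.ofReal_mul (Real.exp_pos _).le]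
  · intro Y
    refine le_trans (ind_le_exp_low hl _) (le_of_eq ?_)
    rw [← ENNReal.ofReal_prod_of_nonneg (fun i _ => by positivity),
      ← ENNReal.ofReal_mul (by positivity)]
    congr 1
    have hp2 : ∏ i : {i // i ∈ x.support}, Real.exp (-l) ^ (Y i)
        = Real.exp (∑ i : {i // i ∈ x.support}, (Y i : ℝ) * (-l)) := by
      rw [Real.exp_sum]
      exact Finset.prod_congr rfl fun i _ => (Real.exp_nat_mul (-l) (Y i)).symm
    rw [hp2, ← Real.exp_add]
    congr 1
    rw [mk_sum_cast, ← Finset.sum_mul]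
    ring



open scoped Classical

variable {S : Type*}

def cons (a : S) (ω : ℕ → S) : ℕ → S := fun k =>
  match k with
  | 0 => a
  | k' + 1 => ω k'

@[simp] lemma cons_zero (a : S) (ω : ℕ → S) : cons a ω 0 = a := rfl
@[simp] lemma cons_succ (a : S) (ω : ℕ → S) (k : ℕ) : cons a ω (k+1) = ω k := rfl

noncomputable def pathExp (T : S → S → ENNReal) (a : S) (m : ℕ)
    (f : (ℕ → S) → ENNReal) : ENNReal :=
  ∑' ω : {ω : ℕ → S // ω 0 = a ∧ ∀ j : ℕ, m ≤ j → ω (j + 1) = ω j},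
    f ω.1 * ∏ k ∈ Finset.range m, T (ω.1 k) (ω.1 (k + 1))

lemma pathProb_le_pathExp (T : S → S → ENNReal) (a : S) (m : ℕ) (E : (ℕ → S) → Prop) :
    pathProb T a m E ≤ pathExp T a m (fun ω => ind (E ω)) := by
  rw [pathProb, pathExp]
  refine Summable.tsum_le_tsum_of_inj (fun ω => ⟨ω.1, ω.2.1, ω.2.2.1⟩)
    (fun ω ω' h => by
      have h2 := congrArg Subtype.val h
      exact Subtype.ext h2)
    (fun c _ => zero_le)
    (fun ω => ?_) ENNReal.summable ENNReal.summable
  have h1 : ind (E ω.1) = 1 := ind_of ω.2.2.2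
  simp only [h1, one_mul]
  exact le_rfl

lemma pathExp_mono (T : S → S → ENNReal) (a : S) (m : ℕ) {f g : (ℕ → S) → ENNReal}
    (h : ∀ ω : ℕ → S, ω 0 = a → f ω ≤ g ω) :
    pathExp T a m f ≤ pathExp T a m g :=
  Summable.tsum_le_tsum (fun ω => mul_le_mul_left (h ω.1 ω.2.1) _)
    ENNReal.summable ENNReal.summable

lemma pathExp_congr (T : S → S → ENNReal) (a : S) (m : ℕ) {f g : (ℕ → S) → ENNReal}
    (h : ∀ ω : ℕ → S, ω 0 = a → f ω = g ω) :
    pathExp T a m f = pathExp T a m g :=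
  tsum_congr (fun ω => by rw [h ω.1 ω.2.1])

lemma pathExp_sum (T : S → S → ENNReal) (a : S) (m : ℕ) {ι : Type*} (s : Finset ι)
    (f : ι → (ℕ → S) → ENNReal) :
    pathExp T a m (fun ω => ∑ i ∈ s, f i ω) = ∑ i ∈ s, pathExp T a m (f i) := by
  rw [pathExp]
  rw [tsum_congr (fun ω => by rw [Finset.sum_mul])]
  exact Summable.tsum_finsetSum (fun i _ => ENNReal.summable)

lemma pathExp_add (T : S → S → ENNReal) (a : S) (m : ℕ) (f g : (ℕ → S) → ENNReal) :
    pathExp T a m (fun ω => f ω + g ω) = pathExp T a m f + pathExp T a m g := by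
  rw [pathExp, pathExp, pathExp, ← ENNReal.tsum_add]
  exact tsum_congr (fun ω => add_mul _ _ _)

lemma pathExp_const_mul (T : S → S → ENNReal) (a : S) (m : ℕ) (c : ENNReal)
    (f : (ℕ → S) → ENNReal) :
    pathExp T a m (fun ω => c * f ω) = c * pathExp T a m f := by
  rw [pathExp, pathExp, ← ENNReal.tsum_mul_left]
  exact tsum_congr (fun ω => by rw [mul_assoc])

lemma pathExp_zero_len (T : S → S → ENNReal) (a : S) (f : (ℕ → S) → ENNReal) :
    pathExp T a 0 f = f (fun _ => a) := by
  rw [pathExp, tsum_eq_single (⟨fun _ => a, rfl, fun _ _ => rfl⟩ :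
      {ω : ℕ → S // ω 0 = a ∧ ∀ j : ℕ, 0 ≤ j → ω (j + 1) = ω j})
    (fun b hb => by
      exfalso
      apply hb
      refine Subtype.ext (funext fun k => ?_)
      induction k with
      | zero => exact b.2.1
      | succ k ih => rw [b.2.2 k (Nat.zero_le k), ih])]
  simp only [Finset.range_zero, Finset.prod_empty, mul_one]

lemma pathExp_succ (T : S → S → ENNReal) (a : S) (m : ℕ) (f : (ℕ → S) → ENNReal) :
    pathExp T a (m+1) f = ∑' b : S, T a b * pathExp T b m (fun ω => f (cons a ω)) := by
  have hR : ∀ b, T a b * pathExp T b m (fun ω => f (cons a ω))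
      = ∑' ω : {ω : ℕ → S // ω 0 = b ∧ ∀ j : ℕ, m ≤ j → ω (j + 1) = ω j},
          T a b * (f (cons a ω.1) * ∏ k ∈ Finset.range m, T (ω.1 k) (ω.1 (k + 1))) := by
    intro b
    rw [pathExp, ENNReal.tsum_mul_left]
  rw [tsum_congr hR, ← ENNReal.tsum_sigma'
    (fun p : Σ b : S, {ω : ℕ → S // ω 0 = b ∧ ∀ j : ℕ, m ≤ j → ω (j + 1) = ω j} =>
      T a p.1 * (f (cons a p.2.1) * ∏ k ∈ Finset.range m, T (p.2.1 k) (p.2.1 (k + 1))))]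
  -- build the equivalence
  let e : (Σ b : S, {ω : ℕ → S // ω 0 = b ∧ ∀ j : ℕ, m ≤ j → ω (j + 1) = ω j})
      ≃ {ω : ℕ → S // ω 0 = a ∧ ∀ j : ℕ, m + 1 ≤ j → ω (j + 1) = ω j} := by
    refine ⟨fun σ => ⟨cons a σ.2.1, rfl, ?_⟩,
            fun ω => ⟨ω.1 1, ⟨fun k => ω.1 (k+1), rfl, fun j hj => ω.2.2 (j+1) (by omega)⟩⟩,
            ?_, ?_⟩
    · intro j hj
      obtain ⟨j', rfl⟩ : ∃ j', j = j' + 1 := ⟨j - 1, by omega⟩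
      exact σ.2.2.2 j' (by omega)
    · rintro ⟨b, ω, h0, hf⟩
      subst h0
      rfl
    · rintro ⟨ω, h0, hf⟩
      refine Subtype.ext (funext fun k => ?_)
      cases k with
      | zero => exact h0.symm
      | succ k => rfl
  calc pathExp T a (m+1) f
      = ∑' σ : (Σ b : S, {ω : ℕ → S // ω 0 = b ∧ ∀ j : ℕ, m ≤ j → ω (j + 1) = ω j}),
          (fun ω : {ω : ℕ → S // ω 0 = a ∧ ∀ j : ℕ, m + 1 ≤ j → ω (j + 1) = ω j} =>
            f ω.1 * ∏ k ∈ Finset.range (m+1), T (ω.1 k) (ω.1 (k + 1))) (e σ) :=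
        (e.tsum_eq _).symm
    _ = ∑' σ : (Σ b : S, {ω : ℕ → S // ω 0 = b ∧ ∀ j : ℕ, m ≤ j → ω (j + 1) = ω j}),
          T a σ.1 * (f (cons a σ.2.1) * ∏ k ∈ Finset.range m, T (σ.2.1 k) (σ.2.1 (k + 1))) := by
        refine tsum_congr (fun σ => ?_)
        obtain ⟨b, ω, h0, hf⟩ := σ
        subst h0
        show f (cons a ω) * ∏ k ∈ Finset.range (m+1), T (cons a ω k) (cons a ω (k + 1))
          = T a (ω 0) * (f (cons a ω) * ∏ k ∈ Finset.range m, T (ω k) (ω (k + 1)))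
        rw [Finset.prod_range_succ']
        simp only [cons_zero, cons_succ]
        ring



section chain
variable {S : Type*} (T : S → S → ENNReal)

lemma pathExp_one (hrow : ∀ x, ∑' b, T x b = 1) :
    ∀ (m : ℕ) (a : S), pathExp T a m (fun _ => 1) = 1 := by
  intro m
  induction m with
  | zero => intro a; rw [pathExp_zero_len]
  | succ m ih =>
    intro a
    rw [pathExp_succ]
    have h1 : ∀ b, T a b * pathExp T b m (fun _ => (1:ENNReal)) = T a b := fun b => by
      rw [ih b, mul_one]
    rw [tsum_congr h1, hrow a]

lemma pathExp_eval_zero (hrow : ∀ x, ∑' b, T x b = 1) (c : S → ENNReal) (a : S) (m : ℕ) :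
    pathExp T a m (fun ω => c (ω 0)) = c a := by
  have h1 : pathExp T a m (fun ω => c (ω 0)) = pathExp T a m (fun _ => c a) :=
    pathExp_congr T a m (fun ω h0 => by rw [h0])
  have h2 : pathExp T a m (fun _ => c a) = c a * pathExp T a m (fun _ => 1) := by
    rw [← pathExp_const_mul]
    exact pathExp_congr T a m (fun ω _ => by rw [mul_one])
  rw [h1, h2, pathExp_one T hrow, mul_one]

lemma pathExp_invariant_zero (P : ℕ → S → Prop) (a : S) (m k : ℕ) (hk : k ≤ m)
    (hP0 : P 0 a) (hstep : ∀ t x b, P t x → T x b ≠ 0 → P (t+1) b) :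
    pathExp T a m (fun ω => ind (¬ P k (ω k))) = 0 := by
  rw [pathExp]
  rw [ENNReal.tsum_eq_zero]
  intro ω
  by_cases hE : P k (ω.1 k)
  · rw [ind_of_not (not_not_intro hE), zero_mul]
  · by_cases hz : ∃ i ∈ Finset.range m, T (ω.1 i) (ω.1 (i+1)) = 0
    · obtain ⟨i, hi, hTz⟩ := hz
      rw [Finset.prod_eq_zero hi hTz, mul_zero]
    · push_neg at hz
      exfalso
      apply hE
      have hind : ∀ i, i ≤ m → P i (ω.1 i) := by
        intro i
        induction i with
        | zero => intro _; rw [ω.2.1]; exact hP0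
        | succ i ih =>
          intro h
          exact hstep i _ _ (ih (by omega)) (hz i (Finset.mem_range.mpr (by omega)))
      exact hind k hk

lemma pathExp_step_bound (hrow : ∀ x, ∑' b, T x b = 1) (G : S → Prop) (F : S → S → Prop)
    (c : ENNReal) (hstep : ∀ x, G x → ∑' b, T x b * ind (F x b) ≤ c) :
    ∀ (k m : ℕ) (a : S), k < m →
      pathExp T a m (fun ω => ind (G (ω k) ∧ F (ω k) (ω (k+1)))) ≤ c := by
  intro k
  induction k with
  | zero =>
    intro m a hm
    obtain ⟨m', rfl⟩ : ∃ m', m = m'+1 := ⟨m-1, by omega⟩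
    rw [pathExp_succ]
    have h1 : ∀ b : S,
        pathExp T b m' (fun ω => ind (G (cons a ω 0) ∧ F (cons a ω 0) (cons a ω 1)))
          = ind (G a ∧ F a b) := by
      intro b
      have h2 : pathExp T b m' (fun ω => ind (G (cons a ω 0) ∧ F (cons a ω 0) (cons a ω 1)))
          = pathExp T b m' (fun _ => ind (G a ∧ F a b)) := by
        refine pathExp_congr T b m' (fun ω h0 => ?_)
        simp only [cons_zero, cons_succ, h0]
      rw [h2]
      have h3 : pathExp T b m' (fun _ => ind (G a ∧ F a b))
          = ind (G a ∧ F a b) * pathExp T b m' (fun _ => 1) := by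
        rw [← pathExp_const_mul]
        exact pathExp_congr T b m' (fun ω _ => by rw [mul_one])
      rw [h3, pathExp_one T hrow, mul_one]
    rw [tsum_congr (fun b => by rw [h1 b])]
    by_cases hGa : G a
    · have h4 : ∀ b, ind (G a ∧ F a b) = ind (F a b) := by
        intro b
        by_cases hF : F a b
        · rw [ind_of ⟨hGa, hF⟩, ind_of hF]
        · rw [ind_of_not (fun hc => hF hc.2), ind_of_not hF]
      rw [tsum_congr (fun b => by rw [h4 b])]
      exact hstep a hGa
    · have h4 : ∀ b, ind (G a ∧ F a b) = 0 := fun b => ind_of_not (fun hc => hGa hc.1)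
      rw [tsum_congr (fun b => by rw [h4 b, mul_zero])]
      simp
  | succ k ih =>
    intro m a hm
    obtain ⟨m', rfl⟩ : ∃ m', m = m'+1 := ⟨m-1, by omega⟩
    rw [pathExp_succ]
    calc ∑' b : S, T a b *
          pathExp T b m' (fun ω =>
            ind (G (cons a ω (k+1)) ∧ F (cons a ω (k+1)) (cons a ω (k+1+1))))
        ≤ ∑' b : S, T a b * c := by
          refine Summable.tsum_le_tsum (fun b => mul_le_mul_right ?_ _) ENNReal.summable ENNReal.summable
          have h5 : (fun ω : ℕ → S =>
              ind (G (cons a ω (k+1)) ∧ F (cons a ω (k+1)) (cons a ω (k+1+1))))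
              = fun ω => ind (G (ω k) ∧ F (ω k) (ω (k+1))) := by
            funext ω
            simp only [cons_succ]
          rw [h5]
          exact ih m' b (by omega)
      _ = c := by rw [ENNReal.tsum_mul_right, hrow a, one_mul]
end chain

section decay
variable (T : (ℕ →₀ ℕ) → (ℕ →₀ ℕ) → ENNReal)

lemma pathExp_decay (hrow : ∀ x, ∑' b, T x b = 1) (r : ENNReal)
    (hKE : ∀ (x : ℕ →₀ ℕ) (j : ℕ), ∑' b, T x b * ((b (j+1) : ℕ) : ENNReal) ≤ r * ((x j : ℕ) : ENNReal)) :
    ∀ (t m j : ℕ) (a : ℕ →₀ ℕ), t ≤ m →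
      pathExp T a m (fun ω => ((ω t (j+t) : ℕ) : ENNReal)) ≤ r^t * ((a j : ℕ) : ENNReal) := by
  intro t
  induction t with
  | zero =>
    intro m j a hm
    rw [show j + 0 = j from rfl, pow_zero, one_mul]
    rw [pathExp_eval_zero T hrow (fun x => ((x j : ℕ) : ENNReal)) a m]
  | succ t ih =>
    intro m j a hm
    obtain ⟨m', rfl⟩ : ∃ m', m = m'+1 := ⟨m-1, by omega⟩
    rw [show j + (t+1) = (j+1)+t from by omega]
    rw [pathExp_succ]
    calc ∑' b, T a b * pathExp T b m' (fun ω => ((cons a ω (t+1) ((j+1)+t) : ℕ) : ENNReal))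
        ≤ ∑' b, T a b * (r^t * ((b (j+1) : ℕ) : ENNReal)) := by
          refine Summable.tsum_le_tsum (fun b => mul_le_mul_right ?_ _) ENNReal.summable ENNReal.summable
          have h5 : (fun ω : ℕ → (ℕ →₀ ℕ) => ((cons a ω (t+1) ((j+1)+t) : ℕ) : ENNReal))
              = fun ω => ((ω t ((j+1)+t) : ℕ) : ENNReal) := by
            funext ω
            simp only [cons_succ]
          rw [h5]
          exact ih m' (j+1) b (by omega)
      _ = r^t * ∑' b, T a b * ((b (j+1) : ℕ) : ENNReal) := by
          rw [← ENNReal.tsum_mul_left]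
          exact tsum_congr (fun b => by ring)
      _ ≤ r^t * (r * ((a j : ℕ) : ENNReal)) := mul_le_mul_right (hKE a j) _
      _ = r^(t+1) * ((a j : ℕ) : ENNReal) := by rw [pow_succ]; ring

lemma pathExp_decay2 (hrow : ∀ x, ∑' b, T x b = 1) (r : ENNReal)
    (hKE : ∀ (x : ℕ →₀ ℕ) (j : ℕ), ∑' b, T x b * ((b (j+1) : ℕ) : ENNReal) ≤ r * ((x j : ℕ) : ENNReal))
    (Pn : (ℕ →₀ ℕ) → Prop)
    (hpres : ∀ x b, T x b ≠ 0 → Pn x → Pn b)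
    (C : ENNReal) (hsize : ∀ x, Pn x → ∀ j, ((x j : ℕ) : ENNReal) ≤ C) :
    ∀ (s t j m : ℕ) (a : ℕ →₀ ℕ), Pn a → s + t ≤ m →
      pathExp T a m (fun ω => ((ω (s+t) (j+t) : ℕ) : ENNReal)) ≤ r^t * C := by
  intro s
  induction s with
  | zero =>
    intro t j m a hPn hm
    rw [show (0:ℕ) + t = t from by omega]
    exact le_trans (pathExp_decay T hrow r hKE t m j a (by omega))
      (mul_le_mul_right (hsize a hPn j) _)
  | succ s ih =>
    intro t j m a hPn hm
    obtain ⟨m', rfl⟩ : ∃ m', m = m'+1 := ⟨m-1, by omega⟩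
    rw [show s + 1 + t = (s+t)+1 from by omega]
    rw [pathExp_succ]
    calc ∑' b, T a b * pathExp T b m' (fun ω => ((cons a ω ((s+t)+1) (j+t) : ℕ) : ENNReal))
        ≤ ∑' b, T a b * (r^t * C) := by
          refine Summable.tsum_le_tsum (fun b => ?_) ENNReal.summable ENNReal.summable
          rcases eq_or_ne (T a b) 0 with h | h
          · rw [h, zero_mul, zero_mul]
          · refine mul_le_mul_right ?_ _
            have h5 : (fun ω : ℕ → (ℕ →₀ ℕ) => ((cons a ω ((s+t)+1) (j+t) : ℕ) : ENNReal))
                = fun ω => ((ω (s+t) (j+t) : ℕ) : ENNReal) := by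
              funext ω
              simp only [cons_succ]
            rw [h5]
            exact ih t j m' b (hpres a b h hPn) (by omega)
      _ = r^t * C := by rw [ENNReal.tsum_mul_right, hrow a, one_mul]
end decay

section analytic

lemma exp_quad_up {x : ℝ} (h0 : 0 ≤ x) (h1 : x ≤ 1) : Real.exp x ≤ 1 + x + x^2 := by
  have hb := Real.exp_bound (x := x) (by rw [abs_of_nonneg h0]; exact h1) (n := 2) (by norm_num)
  have h2 : ∑ m ∈ Finset.range 2, x ^ m / (m.factorial : ℝ) = 1 + x := by
    simp [Finset.sum_range_succ]
  rw [h2] at hb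
  have h3 : |x|^2 * ((2+1 : ℕ) / ((2:ℕ).factorial * (2:ℕ) : ℝ)) = x^2 * (3/4) := by
    rw [abs_of_nonneg h0]
    norm_num [Nat.factorial]
  rw [show ((2:ℕ).succ : ℝ) = ((2:ℕ):ℝ) + 1 by norm_num] at hb
  have h4 := abs_le.mp hb
  nlinarith [h4.2, sq_nonneg x]

lemma exp_quad_down {x : ℝ} (h0 : 0 ≤ x) (h1 : x ≤ 1) : Real.exp (-x) ≤ 1 - x + x^2 := by
  have hb := Real.exp_bound (x := -x) (by rw [abs_neg, abs_of_nonneg h0]; exact h1) (n := 2) (by norm_num)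
  have h2 : ∑ m ∈ Finset.range 2, (-x) ^ m / (m.factorial : ℝ) = 1 - x := by
    simp [Finset.sum_range_succ]
    ring
  rw [h2] at hb
  have h5 : |(-x)| = x := by rw [abs_neg, abs_of_nonneg h0]
  rw [h5, show ((2:ℕ).succ : ℝ) = ((2:ℕ):ℝ) + 1 by norm_num] at hb
  norm_num [Nat.factorial] at hb
  have h4 := abs_le.mp hb
  nlinarith [h4.2, sq_nonneg x]

end analytic

section indmisc

lemma ind_mono {P Q : Prop} (h : P → Q) : ind P ≤ ind Q := by
  by_cases hP : P
  · rw [ind_of hP, ind_of (h hP)]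
  · rw [ind_of_not hP]; exact zero_le

lemma ind_exists_le_sum {ι : Type*} (s : Finset ι) (A : ι → Prop) :
    ind (∃ i ∈ s, A i) ≤ ∑ i ∈ s, ind (A i) := by
  by_cases h : ∃ i ∈ s, A i
  · obtain ⟨i, hi, hA⟩ := h
    rw [ind_of ⟨i, hi, hA⟩]
    calc (1:ENNReal) = ind (A i) := (ind_of hA).symm
      _ ≤ ∑ i ∈ s, ind (A i) :=
          Finset.single_le_sum (f := fun i => ind (A i)) (fun _ _ => zero_le) hi
  · rw [ind_of_not h]; exact zero_le

lemma ind_or_le {P Q : Prop} : ind (P ∨ Q) ≤ ind P + ind Q := by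
  by_cases h : P ∨ Q
  · rw [ind_of h]
    rcases h with h | h
    · calc (1:ENNReal) = ind P := (ind_of h).symm
        _ ≤ _ := le_add_right le_rfl
    · calc (1:ENNReal) = ind Q := (ind_of h).symm
        _ ≤ _ := le_add_left le_rfl
  · rw [ind_of_not h]; exact zero_le

lemma ind_one_le_nat (v : ℕ) : ind (1 ≤ v) ≤ (v : ENNReal) := by
  by_cases h : 1 ≤ v
  · rw [ind_of h]
    exact_mod_cast Nat.one_le_cast.mpr h
  · rw [ind_of_not h]; exact zero_le

lemma geom_tail_le (r : ENNReal) (D K : ℕ) :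
    ∑ i ∈ Finset.Ioc D K, r^i ≤ r^(D+1) * (1-r)⁻¹ := by
  have h1 : Finset.Ioc D K = Finset.Ico (D+1) (K+1) := by
    ext i; simp [Finset.mem_Ioc, Finset.mem_Ico]
  rw [h1, Finset.sum_Ico_eq_sum_range]
  have h2 : ∀ i ∈ Finset.range (K+1-(D+1)), r^(D+1+i) = r^(D+1) * r^i := by
    intro i _; rw [pow_add]
  rw [Finset.sum_congr rfl h2, ← Finset.mul_sum]
  refine mul_le_mul_right ?_ _
  refine le_trans (ENNReal.sum_le_tsum _) ?_
  rw [ENNReal.tsum_geometric]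

end indmisc

section preservation
variable {p q : ℝ}

lemma solTrans_pres {x b : ℕ →₀ ℕ} (hne : solTrans p q x b ≠ 0) :
    (∑ i ∈ b.support, b i = ∑ i ∈ x.support, x i)
    ∧ (∀ i, b i ≠ 0 → i = 0 ∨ ∃ i', i = i' + 1 ∧ x i' ≠ 0) := by
  obtain ⟨Y, hY, rfl⟩ := eq_mkState x p q hne
  constructor
  · have hsub : (mkState x Y).support ⊆ insert 0 (x.support.image (· + 1)) := by
      intro i hi
      rw [Finsupp.mem_support_iff] at hi
      cases i with
      | zero => exact Finset.mem_insert_self _ _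
      | succ i' =>
        refine Finset.mem_insert_of_mem (Finset.mem_image.mpr ⟨i', ?_, rfl⟩)
        by_contra hni
        exact hi (mkState_succ_not x Y i' hni)
    rw [Finset.sum_subset hsub (fun i _ hni => Finsupp.notMem_support_iff.mp hni)]
    rw [Finset.sum_insert (by simp)]
    rw [Finset.sum_image (fun a _ b _ h => by omega)]
    rw [mkState_zero]
    rw [← Finset.sum_attach x.support (fun i => mkState x Y (i + 1))]
    rw [Finset.univ_eq_attach, ← Finset.sum_add_distrib,
      ← Finset.sum_attach x.support (fun i => x i)]
    refine Finset.sum_congr rfl fun i _ => ?_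
    rw [mkState_succ_mem]
    have := mem_PF x hY i
    omega
  · intro i hi
    cases i with
    | zero => exact Or.inl rfl
    | succ i' =>
      refine Or.inr ⟨i', rfl, ?_⟩
      intro hz
      exact hi (mkState_succ_not x Y i' (Finsupp.notMem_support_iff.mpr hz))

end preservation

section chernoffgood

set_option maxHeartbeats 1000000 in
lemma chernoff_good (p q ε : ℝ) (n D : ℕ) (x : ℕ →₀ ℕ)
    (hp0 : 0 < p) (hp1 : p ≤ 1) (hq0 : 0 < q) (hq1 : q ≤ 1)
    (hε0 : 0 < ε) (hε2 : ε ≤ 1/2)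
    (hsupp : ∀ i, D < i → x i = 0)
    (hmass : ∑ i ∈ x.support, x i = n)
    (hD : (D:ℝ) + 1 ≤ ε * (q * n) / 2) :
    ∑' b : ℕ →₀ ℕ, solTrans p q x b * ind (ε * (p*q*n) < |((b 0 : ℕ):ℝ) - p*q*n|)
      ≤ 2 * ENNReal.ofReal (Real.exp (-(ε^2 * (p * q * n)) / 24)) := by
  have hn0 : (0:ℝ) ≤ (n:ℝ) := Nat.cast_nonneg n
  have hc0 : (0:ℝ) ≤ p*q*n := by positivity
  set Tx := ∑ i ∈ x.support, ⌈q * (x i:ℝ)⌉₊ with hTx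
  have hsumcast : ((∑ i ∈ x.support, x i : ℕ) : ℝ) = ∑ i ∈ x.support, ((x i : ℕ):ℝ) := by
    push_cast; rfl
  have hTlow : q * n ≤ (Tx:ℝ) := by
    rw [hTx]
    push_cast
    calc q * (n:ℝ) = ∑ i ∈ x.support, q * (x i:ℝ) := by
          rw [← Finset.mul_sum]
          congr 1
          rw [← hmass, hsumcast]
      _ ≤ ∑ i ∈ x.support, ((⌈q * (x i:ℝ)⌉₊ : ℕ) : ℝ) :=
          Finset.sum_le_sum (fun i _ => Nat.le_ceil _)
  have hcard : (x.support.card : ℝ) ≤ (D:ℝ) + 1 := by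
    have hsub : x.support ⊆ Finset.Iic D := by
      intro i hi
      rw [Finset.mem_Iic]
      by_contra hc
      exact Finsupp.mem_support_iff.mp hi (hsupp i (by omega))
    have h1 : x.support.card ≤ D + 1 := by
      calc x.support.card ≤ (Finset.Iic D).card := Finset.card_le_card hsub
        _ = D + 1 := Nat.card_Iic D
    exact_mod_cast h1
  have hThigh : (Tx:ℝ) ≤ q * n + ((D:ℝ)+1) := by
    rw [hTx]
    push_cast
    calc ∑ i ∈ x.support, ((⌈q * (x i:ℝ)⌉₊ : ℕ):ℝ)
        ≤ ∑ i ∈ x.support, (q * (x i:ℝ) + 1) := by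
          refine Finset.sum_le_sum (fun i _ => ?_)
          exact le_of_lt (Nat.ceil_lt_add_one (by positivity))
      _ = q * (n:ℝ) + x.support.card := by
          rw [Finset.sum_add_distrib, ← Finset.mul_sum]
          congr 2
          · rw [← hmass, hsumcast]
          · simp
      _ ≤ q * n + ((D:ℝ)+1) := by linarith
  have hTp : p * (Tx:ℝ) ≤ (1+ε/2)*(p*q*n) := by
    calc p * (Tx:ℝ) ≤ p * (q*n + ((D:ℝ)+1)) := mul_le_mul_of_nonneg_left hThigh hp0.le
      _ ≤ p * (q*n + ε*(q*n)/2) := mul_le_mul_of_nonneg_left (by linarith) hp0.le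
      _ = (1+ε/2)*(p*q*n) := by ring
  have hTplow : p*q*n ≤ p * (Tx:ℝ) := by
    calc p*q*n = p * (q*n) := by ring
      _ ≤ p * (Tx:ℝ) := mul_le_mul_of_nonneg_left hTlow hp0.le
  set l := ε/6 with hl
  have hl0 : 0 ≤ l := by rw [hl]; positivity
  have hl1 : l ≤ 1 := by rw [hl]; linarith
  -- pointwise split of the indicator
  have hsplit : ∀ b : ℕ →₀ ℕ, ind (ε * (p*q*n) < |((b 0 : ℕ):ℝ) - p*q*n|)
      ≤ ind ((1+ε)*(p*q*(n:ℝ)) ≤ ((b 0:ℕ):ℝ)) + ind (((b 0:ℕ):ℝ) ≤ (1-ε)*(p*q*(n:ℝ))) := by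
    intro b
    refine le_trans (ind_mono ?_) ind_or_le
    intro h
    rcases le_or_gt (p*q*(n:ℝ)) ((b 0:ℕ):ℝ) with hv | hv
    · left
      rw [abs_of_nonneg (by linarith)] at h
      linarith
    · right
      rw [abs_of_neg (by linarith)] at h
      linarith
  have hupN := solTrans_chernoff_up x hp0.le hp1 hq1 hl0 ((1+ε)*(p*q*(n:ℝ)))
  have hlowN := solTrans_chernoff_low x hp0.le hp1 hq1 hl0 ((1-ε)*(p*q*(n:ℝ)))
  -- real bounds on the two exponential expressions
  have hA0up : (0:ℝ) ≤ 1-p+p*Real.exp l := by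
    have h1 := mul_le_mul_of_nonneg_left (Real.one_le_exp hl0) hp0.le
    linarith
  have hA0low : (0:ℝ) ≤ 1-p+p*Real.exp (-l) := by
    have h1 := mul_nonneg hp0.le (Real.exp_pos (-l)).le
    linarith
  have hup : Real.exp (-(l * ((1+ε)*(p*q*(n:ℝ))))) * (1-p+p*Real.exp l)^Tx
      ≤ Real.exp (-(ε^2 * (p * q * n)) / 24) := by
    have h1 : 1-p+p*Real.exp l ≤ Real.exp (p*(Real.exp l - 1)) := by
      have h2 := Real.add_one_le_exp (p*(Real.exp l - 1))
      have h3 : p*(Real.exp l - 1) + 1 = 1-p+p*Real.exp l := by ring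
      linarith
    have h2 : (1-p+p*Real.exp l)^Tx ≤ Real.exp ((Tx:ℝ) * (p*(Real.exp l - 1))) := by
      calc (1-p+p*Real.exp l)^Tx ≤ (Real.exp (p*(Real.exp l - 1)))^Tx :=
            pow_le_pow_left₀ hA0up h1 Tx
        _ = Real.exp ((Tx:ℝ) * (p*(Real.exp l - 1))) := (Real.exp_nat_mul _ Tx).symm
    have hee : Real.exp l - 1 ≤ l + l^2 := by
      have := exp_quad_up hl0 hl1
      linarith
    have hE : (Tx:ℝ) * (p*(Real.exp l - 1)) - l * ((1+ε)*(p*q*(n:ℝ)))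
        ≤ -(ε^2 * (p * q * n)) / 24 := by
      have hstep1 : (Tx:ℝ) * (p*(Real.exp l - 1)) ≤ ((1+ε/2)*(p*q*n))*(l + l^2) := by
        have h6 : 0 ≤ Real.exp l - 1 := by linarith [Real.one_le_exp hl0]
        calc (Tx:ℝ) * (p*(Real.exp l - 1)) = (p * Tx)*(Real.exp l - 1) := by ring
          _ ≤ ((1+ε/2)*(p*q*n))*(Real.exp l - 1) := mul_le_mul_of_nonneg_right hTp h6
          _ ≤ ((1+ε/2)*(p*q*n))*(l + l^2) := by
              refine mul_le_mul_of_nonneg_left hee (by positivity)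
      have h9 : ((1+ε/2)*(l+l^2) - l*(1+ε) + ε^2/24) * (p*q*(n:ℝ)) ≤ 0 := by
        have h10 : (1+ε/2)*(l+l^2) - l*(1+ε) + ε^2/24 = ε^2*(ε-1)/72 := by
          rw [hl]; ring
        rw [h10]
        have h14 : ε^2*(ε-1)/72 * (p*q*(n:ℝ)) = (ε^2 * (p*q*(n:ℝ))) * ((ε-1)/72) := by ring
        rw [h14]
        have h15 : (0:ℝ) ≤ ε^2 * (p*q*(n:ℝ)) := by positivity
        have h16 : (ε-1)/72 ≤ 0 := by linarith
        have h17 := mul_nonneg h15 (neg_nonneg.mpr h16)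
        linarith
      linarith [hstep1, h9]
    calc Real.exp (-(l * ((1+ε)*(p*q*(n:ℝ))))) * (1-p+p*Real.exp l)^Tx
        ≤ Real.exp (-(l * ((1+ε)*(p*q*(n:ℝ))))) * Real.exp ((Tx:ℝ) * (p*(Real.exp l - 1))) :=
          mul_le_mul_of_nonneg_left h2 (Real.exp_pos _).le
      _ = Real.exp ((Tx:ℝ) * (p*(Real.exp l - 1)) - l * ((1+ε)*(p*q*(n:ℝ)))) := by
          rw [← Real.exp_add]; congr 1; ring
      _ ≤ Real.exp (-(ε^2 * (p * q * n)) / 24) := Real.exp_le_exp.mpr hE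
  have hlow : Real.exp (l * ((1-ε)*(p*q*(n:ℝ)))) * (1-p+p*Real.exp (-l))^Tx
      ≤ Real.exp (-(ε^2 * (p * q * n)) / 24) := by
    have h1 : 1-p+p*Real.exp (-l) ≤ Real.exp (p*(Real.exp (-l) - 1)) := by
      have h2 := Real.add_one_le_exp (p*(Real.exp (-l) - 1))
      have h3 : p*(Real.exp (-l) - 1) + 1 = 1-p+p*Real.exp (-l) := by ring
      linarith
    have h2 : (1-p+p*Real.exp (-l))^Tx ≤ Real.exp ((Tx:ℝ) * (p*(Real.exp (-l) - 1))) := by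
      calc (1-p+p*Real.exp (-l))^Tx ≤ (Real.exp (p*(Real.exp (-l) - 1)))^Tx :=
            pow_le_pow_left₀ hA0low h1 Tx
        _ = Real.exp ((Tx:ℝ) * (p*(Real.exp (-l) - 1))) := (Real.exp_nat_mul _ Tx).symm
    have hee : Real.exp (-l) - 1 ≤ -l + l^2 := by
      have := exp_quad_down hl0 hl1
      linarith
    have hE : (Tx:ℝ) * (p*(Real.exp (-l) - 1)) + l * ((1-ε)*(p*q*(n:ℝ)))
        ≤ -(ε^2 * (p * q * n)) / 24 := by
      have hneg : -l + l^2 ≤ 0 := by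
        have h6 : l*l ≤ 1*l := mul_le_mul_of_nonneg_right hl1 hl0
        have h7 : l^2 = l*l := sq l
        linarith
      have hstep1 : (Tx:ℝ) * (p*(Real.exp (-l) - 1)) ≤ (p*q*(n:ℝ))*(-l + l^2) := by
        calc (Tx:ℝ) * (p*(Real.exp (-l) - 1)) = (p*Tx)*(Real.exp (-l) - 1) := by ring
          _ ≤ (p*Tx)*(-l + l^2) := by
              refine mul_le_mul_of_nonneg_left hee (by positivity)
          _ ≤ (p*q*(n:ℝ))*(-l + l^2) := mul_le_mul_of_nonpos_right hTplow hneg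
      have h9 : ((-l+l^2) + l*(1-ε) + ε^2/24) * (p*q*(n:ℝ)) ≤ 0 := by
        have h10 : (-l+l^2) + l*(1-ε) + ε^2/24 = ε^2*(-7)/72 := by
          rw [hl]; ring
        rw [h10]
        have h14 : ε^2*(-7)/72 * (p*q*(n:ℝ)) = (ε^2 * (p*q*(n:ℝ))) * ((-7)/72) := by ring
        rw [h14]
        have h15 : (0:ℝ) ≤ ε^2 * (p*q*(n:ℝ)) := by positivity
        have h17 := mul_nonneg h15 (by norm_num : (0:ℝ) ≤ 7/72)
        nlinarith [h17]
      linarith [hstep1, h9]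
    calc Real.exp (l * ((1-ε)*(p*q*(n:ℝ)))) * (1-p+p*Real.exp (-l))^Tx
        ≤ Real.exp (l * ((1-ε)*(p*q*(n:ℝ)))) * Real.exp ((Tx:ℝ) * (p*(Real.exp (-l) - 1))) :=
          mul_le_mul_of_nonneg_left h2 (Real.exp_pos _).le
      _ = Real.exp ((Tx:ℝ) * (p*(Real.exp (-l) - 1)) + l * ((1-ε)*(p*q*(n:ℝ)))) := by
          rw [← Real.exp_add]; congr 1; ring
      _ ≤ Real.exp (-(ε^2 * (p * q * n)) / 24) := Real.exp_le_exp.mpr hE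
  -- assemble in ENNReal
  calc ∑' b : ℕ →₀ ℕ, solTrans p q x b * ind (ε * (p*q*n) < |((b 0 : ℕ):ℝ) - p*q*n|)
      ≤ ∑' b : ℕ →₀ ℕ, (solTrans p q x b * ind ((1+ε)*(p*q*(n:ℝ)) ≤ ((b 0:ℕ):ℝ))
          + solTrans p q x b * ind (((b 0:ℕ):ℝ) ≤ (1-ε)*(p*q*(n:ℝ)))) := by
        refine Summable.tsum_le_tsum (fun b => ?_) ENNReal.summable ENNReal.summable
        rw [← mul_add]
        exact mul_le_mul_right (hsplit b) _
    _ = (∑' b : ℕ →₀ ℕ, solTrans p q x b * ind ((1+ε)*(p*q*(n:ℝ)) ≤ ((b 0:ℕ):ℝ)))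
          + ∑' b : ℕ →₀ ℕ, solTrans p q x b * ind (((b 0:ℕ):ℝ) ≤ (1-ε)*(p*q*(n:ℝ))) :=
        ENNReal.tsum_add
    _ ≤ ENNReal.ofReal (Real.exp (-(l * ((1+ε)*(p*q*(n:ℝ)))))
            * (1-p+p*Real.exp l)^Tx)
          + ENNReal.ofReal (Real.exp (l * ((1-ε)*(p*q*(n:ℝ))))
            * (1-p+p*Real.exp (-l))^Tx) := add_le_add hupN hlowN
    _ ≤ ENNReal.ofReal (Real.exp (-(ε^2 * (p * q * n)) / 24))
          + ENNReal.ofReal (Real.exp (-(ε^2 * (p * q * n)) / 24)) :=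
        add_le_add (ENNReal.ofReal_le_ofReal hup) (ENNReal.ofReal_le_ofReal hlow)
    _ = 2 * ENNReal.ofReal (Real.exp (-(ε^2 * (p * q * n)) / 24)) := (two_mul _).symm

end chernoffgood

section mainbound

set_option maxHeartbeats 1000000 in
lemma main_bound (p q ε : ℝ) (n D M : ℕ) (a : ℕ →₀ ℕ)
    (hp0 : 0 < p) (hp1 : p ≤ 1) (hq0 : 0 < q) (hq1 : q ≤ 1)
    (hε0 : 0 < ε) (hε2 : ε ≤ 1/2)
    (ha : ∑ i ∈ a.support, a i = n)
    (hDle : (D:ℝ) + 1 ≤ ε * (q * n) / 2) :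
    pathProb (solTrans p q) a (D+M)
      (fun ω => ∃ k : ℕ, D+1 ≤ k ∧ k ≤ D+M ∧
        ε * (p*q*n) < |(((ω k) 0 : ℕ):ℝ) - p*q*n|)
      ≤ (M:ENNReal) * ((n:ENNReal) * ((ENNReal.ofReal (1-p*q))^D * (1-ENNReal.ofReal (1-p*q))⁻¹)
          + (n:ENNReal) * (ENNReal.ofReal (1-p*q))^D
          + 2 * ENNReal.ofReal (Real.exp (-(ε^2 * (p * q * n)) / 24))) := by
  set T := solTrans p q with hT
  set m := D + M with hm
  set r := ENNReal.ofReal (1-p*q) with hr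
  set c := 2 * ENNReal.ofReal (Real.exp (-(ε^2 * (p * q * (n:ℝ))) / 24)) with hc
  set B := (n:ENNReal) * (r^D * (1-r)⁻¹) + (n:ENNReal) * r^D + c with hB
  have hrow : ∀ x, ∑' b, T x b = 1 := fun x => solTrans_rowsum x hp0.le hp1 hq1
  have hKE : ∀ (x : ℕ →₀ ℕ) (j : ℕ),
      ∑' b, T x b * ((b (j+1) : ℕ) : ENNReal) ≤ r * ((x j : ℕ) : ENNReal) :=
    fun x j => solTrans_exp_step x hp0.le hp1 hq0.le hq1 j
  have hr1 : r ≤ 1 := by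
    rw [hr]
    exact ENNReal.ofReal_le_one.mpr (by nlinarith)
  -- invariants
  set Inv : ℕ → (ℕ →₀ ℕ) → Prop := fun t x =>
    (∑ i ∈ x.support, x i = n) ∧ ∀ i, x i ≠ 0 → i ≤ t ∨ ∃ j ∈ a.support, i = j + t
    with hInv
  have hInv0 : Inv 0 a := by
    refine ⟨ha, fun i hi => Or.inr ⟨i, Finsupp.mem_support_iff.mpr hi, by omega⟩⟩
  have hInvStep : ∀ t x b, Inv t x → T x b ≠ 0 → Inv (t+1) b := by
    intro t x b hIx hne
    obtain ⟨hmass', hshift⟩ := solTrans_pres hne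
    refine ⟨by rw [hmass', hIx.1], ?_⟩
    intro i hi
    rcases hshift i hi with rfl | ⟨i', rfl, hx⟩
    · left; omega
    · rcases hIx.2 i' hx with h | ⟨j, hj, rfl⟩
      · left; omega
      · right; exact ⟨j, hj, by omega⟩
  have hpres : ∀ x b, T x b ≠ 0 → (∑ i ∈ x.support, x i = n) → (∑ i ∈ b.support, b i = n) := by
    intro x b hne hx
    rw [(solTrans_pres hne).1, hx]
  have hsize : ∀ x : ℕ →₀ ℕ, (∑ i ∈ x.support, x i = n) → ∀ j, ((x j : ℕ) : ENNReal) ≤ (n:ENNReal) := by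
    intro x hx j
    have h1 : x j ≤ n := by
      by_cases hj : j ∈ x.support
      · rw [← hx]
        exact Finset.single_le_sum (f := fun i => x i) (fun _ _ => Nat.zero_le _) hj
      · rw [Finsupp.notMem_support_iff.mp hj]
        exact Nat.zero_le _
    exact_mod_cast Nat.cast_le.mpr h1
  set G : (ℕ →₀ ℕ) → Prop := fun x => (∑ i ∈ x.support, x i = n) ∧ ∀ i, D < i → x i = 0 with hG
  set F : (ℕ →₀ ℕ) → (ℕ →₀ ℕ) → Prop :=
    fun _ b => ε * (p*q*(n:ℝ)) < |((b 0 : ℕ):ℝ) - p*q*(n:ℝ)| with hF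
  have hstepG : ∀ x, G x → ∑' b, T x b * ind (F x b) ≤ c :=
    fun x hGx => chernoff_good p q ε n D x hp0 hp1 hq0 hq1 hε0 hε2
      (fun i hi => hGx.2 i hi) hGx.1 hDle
  -- per-k bound
  have perk : ∀ k ∈ Finset.Icc (D+1) m,
      pathExp T a m (fun ω => ind (ε * (p*q*(n:ℝ)) < |(((ω k) 0 : ℕ):ℝ) - p*q*(n:ℝ)|)) ≤ B := by
    intro k hk
    rw [Finset.mem_Icc] at hk
    set k' := k - 1 with hk'
    have hkk : k = k' + 1 := by omega
    have hk'm : k' < m := by omega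
    -- pointwise decomposition
    have hpt : ∀ ω : ℕ → (ℕ →₀ ℕ), ω 0 = a →
        ind (ε * (p*q*(n:ℝ)) < |(((ω k) 0 : ℕ):ℝ) - p*q*(n:ℝ)|)
          ≤ ind (¬ Inv k' (ω k'))
            + ind (∃ i ∈ Finset.Ioc D k', 1 ≤ ω k' i)
            + ind (∃ j ∈ a.support, 1 ≤ ω k' (j + k'))
            + ind (G (ω k') ∧ F (ω k') (ω (k'+1))) := by
      intro ω _
      by_cases hdev : ε * (p*q*(n:ℝ)) < |(((ω k) 0 : ℕ):ℝ) - p*q*(n:ℝ)|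
      · by_cases hI : Inv k' (ω k')
        · by_cases hA : ∃ i ∈ Finset.Ioc D k', 1 ≤ ω k' i
          · calc ind _ ≤ 1 := ind_le_one _
              _ = ind (∃ i ∈ Finset.Ioc D k', 1 ≤ ω k' i) := (ind_of hA).symm
              _ ≤ _ := le_add_right (le_add_right (le_add_left le_rfl))
          · by_cases hBB : ∃ j ∈ a.support, 1 ≤ ω k' (j + k')
            · calc ind _ ≤ 1 := ind_le_one _
                _ = ind (∃ j ∈ a.support, 1 ≤ ω k' (j + k')) := (ind_of hBB).symm
                _ ≤ _ := le_add_right (le_add_left le_rfl)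
            · have hGk : G (ω k') := by
                refine ⟨hI.1, ?_⟩
                intro i hi
                by_contra hz
                rcases hI.2 i hz with h | ⟨j, hj, rfl⟩
                · exact hA ⟨i, Finset.mem_Ioc.mpr ⟨hi, h⟩, by omega⟩
                · exact hBB ⟨j, hj, by omega⟩
              have hFk : F (ω k') (ω (k'+1)) := by
                rw [hF]
                rw [← hkk]
                exact hdev
              calc ind _ ≤ 1 := ind_le_one _
                _ = ind (G (ω k') ∧ F (ω k') (ω (k'+1))) := (ind_of ⟨hGk, hFk⟩).symm
                _ ≤ _ := le_add_left le_rfl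
        · calc ind _ ≤ 1 := ind_le_one _
            _ = ind (¬ Inv k' (ω k')) := (ind_of hI).symm
            _ ≤ _ := le_add_right (le_add_right (le_add_right le_rfl))
      · rw [ind_of_not hdev]
        exact zero_le
    refine le_trans (pathExp_mono T a m hpt) ?_
    rw [pathExp_add, pathExp_add, pathExp_add]
    -- term 1 : invariant violation has probability 0
    have hE1 : pathExp T a m (fun ω => ind (¬ Inv k' (ω k'))) = 0 :=
      pathExp_invariant_zero T Inv a m k' (by omega) hInv0 hInvStep
    -- term 2 : old new piles
    have hE2 : pathExp T a m (fun ω => ind (∃ i ∈ Finset.Ioc D k', 1 ≤ ω k' i))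
        ≤ (n:ENNReal) * (r^D * (1-r)⁻¹) := by
      refine le_trans (pathExp_mono T a m
        (fun ω _ => ind_exists_le_sum (Finset.Ioc D k') (fun i => 1 ≤ ω k' i))) ?_
      rw [pathExp_sum]
      have hone : ∀ i ∈ Finset.Ioc D k',
          pathExp T a m (fun ω => ind (1 ≤ ω k' i)) ≤ r^i * (n:ENNReal) := by
        intro i hi
        rw [Finset.mem_Ioc] at hi
        refine le_trans (pathExp_mono T a m (fun ω _ => ind_one_le_nat (ω k' i))) ?_
        have hdec := pathExp_decay2 T hrow r hKE
          (fun x => ∑ i ∈ x.support, x i = n) hpres (n:ENNReal) hsize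
          (k' - i) i 0 m a ha (by omega)
        rw [show k' - i + i = k' from by omega, Nat.zero_add] at hdec
        exact hdec
      refine le_trans (Finset.sum_le_sum hone) ?_
      have : ∑ i ∈ Finset.Ioc D k', r^i * (n:ENNReal)
          = (∑ i ∈ Finset.Ioc D k', r^i) * (n:ENNReal) := by
        rw [Finset.sum_mul]
      rw [this]
      calc (∑ i ∈ Finset.Ioc D k', r^i) * (n:ENNReal)
          ≤ (r^(D+1) * (1-r)⁻¹) * (n:ENNReal) :=
            mul_le_mul_left (geom_tail_le r D k') _
        _ ≤ (r^D * (1-r)⁻¹) * (n:ENNReal) := by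
            refine mul_le_mul_left (mul_le_mul_left ?_ _) _
            rw [pow_succ]
            exact mul_le_of_le_one_right (zero_le) hr1
        _ = (n:ENNReal) * (r^D * (1-r)⁻¹) := mul_comm _ _
    -- term 3 : original piles
    have hE3 : pathExp T a m (fun ω => ind (∃ j ∈ a.support, 1 ≤ ω k' (j + k')))
        ≤ (n:ENNReal) * r^D := by
      refine le_trans (pathExp_mono T a m
        (fun ω _ => ind_exists_le_sum a.support (fun j => 1 ≤ ω k' (j + k')))) ?_
      rw [pathExp_sum]
      have hone : ∀ j ∈ a.support,
          pathExp T a m (fun ω => ind (1 ≤ ω k' (j + k'))) ≤ r^k' * ((a j : ℕ) : ENNReal) := by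
        intro j _
        refine le_trans (pathExp_mono T a m (fun ω _ => ind_one_le_nat (ω k' (j + k')))) ?_
        exact pathExp_decay T hrow r hKE k' m j a (by omega)
      refine le_trans (Finset.sum_le_sum hone) ?_
      rw [← Finset.mul_sum]
      have hcast : ∑ j ∈ a.support, ((a j : ℕ) : ENNReal) = (n:ENNReal) := by
        rw [← Nat.cast_sum, ha]
      rw [hcast]
      calc r^k' * (n:ENNReal) ≤ r^D * (n:ENNReal) := by
            refine mul_le_mul_left ?_ _
            rw [show k' = D + (k' - D) from by omega, pow_add]
            exact mul_le_of_le_one_right (zero_le) (pow_le_one' hr1 _)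
        _ = (n:ENNReal) * r^D := mul_comm _ _
    -- term 4 : Chernoff on good states
    have hE4 : pathExp T a m (fun ω => ind (G (ω k') ∧ F (ω k') (ω (k'+1)))) ≤ c :=
      pathExp_step_bound T hrow G F c hstepG k' m a hk'm
    rw [hE1, zero_add]
    rw [hB]
    exact add_le_add (add_le_add hE2 hE3) hE4
  -- union bound over the window
  calc pathProb T a m
        (fun ω => ∃ k : ℕ, D+1 ≤ k ∧ k ≤ D+M ∧
          ε * (p*q*(n:ℝ)) < |(((ω k) 0 : ℕ):ℝ) - p*q*(n:ℝ)|)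
      ≤ pathExp T a m (fun ω => ind (∃ k : ℕ, D+1 ≤ k ∧ k ≤ D+M ∧
          ε * (p*q*(n:ℝ)) < |(((ω k) 0 : ℕ):ℝ) - p*q*(n:ℝ)|)) :=
        pathProb_le_pathExp T a m _
    _ ≤ pathExp T a m (fun ω => ∑ k ∈ Finset.Icc (D+1) m,
          ind (ε * (p*q*(n:ℝ)) < |(((ω k) 0 : ℕ):ℝ) - p*q*(n:ℝ)|)) := by
        refine pathExp_mono T a m (fun ω _ => ?_)
        refine le_trans (ind_mono ?_) (ind_exists_le_sum (Finset.Icc (D+1) m)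
          (fun k => ε * (p*q*(n:ℝ)) < |(((ω k) 0 : ℕ):ℝ) - p*q*(n:ℝ)|))
        rintro ⟨k, h1, h2, h3⟩
        exact ⟨k, Finset.mem_Icc.mpr ⟨h1, by omega⟩, h3⟩
    _ = ∑ k ∈ Finset.Icc (D+1) m, pathExp T a m (fun ω =>
          ind (ε * (p*q*(n:ℝ)) < |(((ω k) 0 : ℕ):ℝ) - p*q*(n:ℝ)|)) := pathExp_sum T a m _ _
    _ ≤ ∑ k ∈ Finset.Icc (D+1) m, B := Finset.sum_le_sum perk
    _ = ((Finset.Icc (D+1) m).card : ENNReal) * B := by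
        rw [Finset.sum_const]
        simp [nsmul_eq_mul]
    _ = (M:ENNReal) * B := by
        have hcard2 : (Finset.Icc (D+1) m).card = M := by
          rw [Nat.card_Icc]
          omega
        rw [hcard2]
    _ = _ := by rw [hB]

end mainbound

lemma pathProb_mono {S : Type*} (T : S → S → ENNReal) (a : S) (m : ℕ)
    {E E' : (ℕ → S) → Prop} (h : ∀ ω, E ω → E' ω) :
    pathProb T a m E ≤ pathProb T a m E' := by
  rw [pathProb, pathProb]
  refine Summable.tsum_le_tsum_of_inj (fun ω => ⟨ω.1, ω.2.1, ω.2.2.1, h ω.1 ω.2.2.2⟩)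
    (fun ω ω' hh => by
      have h2 := congrArg Subtype.val hh
      exact Subtype.ext h2)
    (fun c _ => zero_le)
    (fun ω => le_rfl) ENNReal.summable ENNReal.summable

lemma log_ge_one {n : ℕ} (hn : 3 ≤ n) : 1 ≤ Real.log n := by
  have hn0 : (0:ℝ) < n := by
    have : (3:ℝ) ≤ (n:ℝ) := by exact_mod_cast hn
    linarith
  rw [Real.le_log_iff_exp_le hn0]
  have h1 := Real.exp_one_lt_d9
  have : (3:ℝ) ≤ (n:ℝ) := by exact_mod_cast hn
  linarith

end BS

open BS in
set_option maxHeartbeats 2000000 in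
theorem stmt6 (p q : ℕ → ℝ)
    (hp : ∀ n : ℕ, 2 ≤ n → 0 < p n ∧ p n ≤ 1) (hq : ∀ n : ℕ, 2 ≤ n → 0 < q n ∧ q n ≤ 1)
    (hinf : Tendsto (fun n : ℕ => p n * (q n) ^ 2 * n / Real.log n) atTop atTop)
    (α0 : (n : ℕ) → ℕ →₀ ℕ) (hα0 : ∀ n : ℕ, 2 ≤ n → IsWeakComp n (α0 n)) :
    -- max over D+1 ≤ k ≤ D+M of |alpha^(k)_1 − pₙqₙn|/(pₙqₙn) → 0 in probability,
    -- with D = ⌈14·log n/(pₙqₙ)⌉ and M = ⌈n²/pₙ⌉; alpha^(k)_1 is part 0 of ω k: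
    ∀ ε : ℝ, 0 < ε →
      Tendsto (fun n : ℕ =>
          pathProb (solTrans (p n) (q n)) (α0 n)
            (⌈14 * Real.log n / (p n * q n)⌉₊ + ⌈(n : ℝ) ^ 2 / p n⌉₊)
            (fun ω => ∃ k : ℕ, ⌈14 * Real.log n / (p n * q n)⌉₊ + 1 ≤ k ∧
              k ≤ ⌈14 * Real.log n / (p n * q n)⌉₊ + ⌈(n : ℝ) ^ 2 / p n⌉₊ ∧
              ε * (p n * q n * n) < |((ω k) 0 : ℝ) - p n * q n * n|))
        atTop (nhds 0) := by
  intro ε hε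
  set ε₀ := min ε (1/2) with hε₀def
  have hε₀0 : 0 < ε₀ := lt_min hε (by norm_num)
  have hε₀2 : ε₀ ≤ 1/2 := min_le_right _ _
  have hε₀ε : ε₀ ≤ ε := min_le_left _ _
  set K : ℝ := 1000 * (1 + 1/ε₀^2 + 1/ε₀) with hKdef
  have hinv1 : 0 ≤ 1/ε₀ := by positivity
  have hinv2 : 0 ≤ 1/ε₀^2 := by positivity
  have hK1 : 1 ≤ K := by rw [hKdef]; nlinarith
  have hK56 : 56/ε₀ ≤ K := by
    rw [hKdef]
    have h3 : 56/ε₀ = 56*(1/ε₀) := by ring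
    have h4 : (0:ℝ) ≤ 944*(1/ε₀) := by positivity
    linarith
  have hK8 : 8/ε₀ ≤ K := by
    rw [hKdef]
    have h3 : 8/ε₀ = 8*(1/ε₀) := by ring
    have h4 : (0:ℝ) ≤ 992*(1/ε₀) := by positivity
    linarith
  have hK480 : 480/ε₀^2 ≤ K := by
    rw [hKdef]
    have h3 : 480/ε₀^2 = 480*(1/ε₀^2) := by ring
    have h4 : (0:ℝ) ≤ 520*(1/ε₀^2) := by positivity
    linarith
  have hg0 : Tendsto (fun n : ℕ => ENNReal.ofReal (1/(n:ℝ))) atTop (nhds 0) := by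
    have h1 := ENNReal.tendsto_ofReal (tendsto_one_div_atTop_nhds_zero_nat)
    simpa using h1
  refine tendsto_of_tendsto_of_tendsto_of_le_of_le' tendsto_const_nhds hg0
    (Eventually.of_forall (fun n => zero_le)) ?_
  filter_upwards [hinf.eventually_ge_atTop K, eventually_ge_atTop 3] with n hKn hn3
  -- fixed n from here on
  obtain ⟨hp0, hp1⟩ := hp n (by omega)
  obtain ⟨hq0, hq1⟩ := hq n (by omega)
  have ha : ∑ i ∈ (α0 n).support, (α0 n) i = n := hα0 n (by omega)
  set P := p n with hPdef
  set Q := q n with hQdef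
  set L := Real.log (n:ℝ) with hLdef
  have hL1 : 1 ≤ L := log_ge_one hn3
  have hL0 : 0 < L := by linarith
  have hN3 : (3:ℝ) ≤ (n:ℝ) := by exact_mod_cast hn3
  have hN0 : (0:ℝ) < (n:ℝ) := by linarith
  have hN1 : (1:ℝ) ≤ (n:ℝ) := by linarith
  have hKL : K * L ≤ P * Q^2 * (n:ℝ) := (le_div_iff₀ hL0).mp hKn
  have hK0 : (0:ℝ) ≤ K := le_trans zero_le_one hK1
  have hKL1 : K ≤ K * L := by
    calc K = K * 1 := (mul_one K).symm
      _ ≤ K * L := mul_le_mul_of_nonneg_left hL1 hK0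
  have hPQ1 : P * Q ≤ 1 := by
    calc P * Q ≤ 1 * 1 := mul_le_mul hp1 hq1 hq0.le zero_le_one
      _ = 1 := one_mul 1
  have hQ21 : Q^2 ≤ 1 := pow_le_one₀ hq0.le hq1
  have hq2 : P * Q^2 * (n:ℝ) ≤ P * Q * (n:ℝ) := by
    calc P * Q^2 * (n:ℝ) = (P * Q * (n:ℝ)) * Q := by ring
      _ ≤ (P * Q * (n:ℝ)) * 1 := mul_le_mul_of_nonneg_left hq1 (by positivity)
      _ = P * Q * (n:ℝ) := mul_one _
  have hqn : P * Q^2 * (n:ℝ) ≤ Q * (n:ℝ) := by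
    calc P * Q^2 * (n:ℝ) = (Q * (n:ℝ)) * (P * Q) := by ring
      _ ≤ (Q * (n:ℝ)) * 1 := mul_le_mul_of_nonneg_left hPQ1 (by positivity)
      _ = Q * (n:ℝ) := mul_one _
  have hPN : P * Q^2 * (n:ℝ) ≤ P * (n:ℝ) := by
    calc P * Q^2 * (n:ℝ) = (P * (n:ℝ)) * Q^2 := by ring
      _ ≤ (P * (n:ℝ)) * 1 := mul_le_mul_of_nonneg_left hQ21 (by positivity)
      _ = P * (n:ℝ) := mul_one _
  have hPQN1 : 1 ≤ P * Q * (n:ℝ) := by linarith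
  have hPN1 : 1 ≤ P * (n:ℝ) := by linarith
  have hPQpos : 0 < P * Q := by positivity
  have hpq_invN : (P*Q)⁻¹ ≤ (n:ℝ) := by
    rw [inv_le_iff_one_le_mul₀' hPQpos]
    linarith [hPQN1]
  have hp_invN : P⁻¹ ≤ (n:ℝ) := by
    rw [inv_le_iff_one_le_mul₀' hp0]
    linarith [hPN1]
  set D := ⌈14 * L / (P * Q)⌉₊ with hDdef
  set M := ⌈(n:ℝ)^2 / P⌉₊ with hMdef
  have harg0 : 0 ≤ 14 * L / (P * Q) := by positivity
  have hDub : (D:ℝ) ≤ 14*L/(P*Q) + 1 := le_of_lt (Nat.ceil_lt_add_one harg0)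
  have hDlb : 14*L/(P*Q) ≤ (D:ℝ) := Nat.le_ceil _
  have hDle : (D:ℝ) + 1 ≤ ε₀ * (Q * (n:ℝ)) / 2 := by
    have h56 : 14*L/(P*Q) ≤ ε₀*(Q*(n:ℝ))/4 := by
      rw [div_le_iff₀ hPQpos]
      have h1 : 56*L ≤ ε₀*(P*Q^2*(n:ℝ)) := by
        calc 56*L = (56/ε₀)*(ε₀*L) := by field_simp
          _ ≤ K*(ε₀*L) := mul_le_mul_of_nonneg_right hK56 (by positivity)
          _ = ε₀*(K*L) := by ring
          _ ≤ ε₀*(P*Q^2*(n:ℝ)) := mul_le_mul_of_nonneg_left hKL hε₀0.le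
      linarith [h1]
    have h8 : (2:ℝ) ≤ ε₀*(Q*(n:ℝ))/4 := by
      have h2 : (8:ℝ) ≤ ε₀*(Q*(n:ℝ)) := by
        calc (8:ℝ) = (8/ε₀)*ε₀ := by field_simp
          _ ≤ K*ε₀ := mul_le_mul_of_nonneg_right hK8 hε₀0.le
          _ ≤ (K*L)*ε₀ := mul_le_mul_of_nonneg_right hKL1 hε₀0.le
          _ ≤ (P*Q^2*(n:ℝ))*ε₀ := mul_le_mul_of_nonneg_right hKL hε₀0.le
          _ ≤ (Q*(n:ℝ))*ε₀ := mul_le_mul_of_nonneg_right hqn hε₀0.le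
          _ = ε₀*(Q*(n:ℝ)) := mul_comm _ _
      linarith
    linarith
  have hDpq : 14*L ≤ P*Q*(D:ℝ) := by
    have h3 := mul_le_mul_of_nonneg_left hDlb hPQpos.le
    have h4 : P*Q*(14*L/(P*Q)) = 14*L := by field_simp
    linarith
  have hMub : (M:ℝ) ≤ (n:ℝ)^4 := by
    have h1 : (M:ℝ) ≤ (n:ℝ)^2/P + 1 := le_of_lt (Nat.ceil_lt_add_one (by positivity))
    have h2 : (n:ℝ)^2/P ≤ (n:ℝ)^3 := by
      rw [div_eq_mul_inv]
      calc (n:ℝ)^2 * P⁻¹ ≤ (n:ℝ)^2 * (n:ℝ) :=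
            mul_le_mul_of_nonneg_left hp_invN (by positivity)
        _ = (n:ℝ)^3 := by ring
    have h4 : 3*(n:ℝ)^3 ≤ (n:ℝ)^4 := by
      calc 3*(n:ℝ)^3 ≤ (n:ℝ)*(n:ℝ)^3 := mul_le_mul_of_nonneg_right hN3 (by positivity)
        _ = (n:ℝ)^4 := by ring
    have h5 : (1:ℝ) ≤ (n:ℝ)^3 := one_le_pow₀ hN1
    linarith
  have h1pq0 : (0:ℝ) ≤ 1 - P*Q := by nlinarith
  have hN14 : Real.exp (-(14*L)) = ((n:ℝ)^14)⁻¹ := by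
    rw [Real.exp_neg]
    congr 1
    rw [show (14:ℝ)*L = ((14:ℕ):ℝ)*L by norm_num, Real.exp_nat_mul, hLdef, Real.exp_log hN0]
  have hdecay : (1-P*Q)^D ≤ ((n:ℝ)^14)⁻¹ := by
    have h1 : (1-P*Q)^D ≤ Real.exp (-(P*Q))^D :=
      pow_le_pow_left₀ h1pq0 (by linarith [Real.add_one_le_exp (-(P*Q))]) D
    have h2 : Real.exp (-(P*Q))^D = Real.exp (-(P*Q*(D:ℝ))) := by
      rw [← Real.exp_nat_mul]; congr 1; ring
    have h3 : Real.exp (-(P*Q*(D:ℝ))) ≤ Real.exp (-(14*L)) :=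
      Real.exp_le_exp.mpr (by linarith)
    calc (1-P*Q)^D ≤ Real.exp (-(P*Q))^D := h1
      _ = Real.exp (-(P*Q*(D:ℝ))) := h2
      _ ≤ Real.exp (-(14*L)) := h3
      _ = ((n:ℝ)^14)⁻¹ := hN14
  have hcher : Real.exp (-(ε₀^2 * (P*Q*(n:ℝ)))/24) ≤ ((n:ℝ)^14)⁻¹ := by
    have h1 : 480*L ≤ ε₀^2*(P*Q*(n:ℝ)) := by
      calc 480*L = (480/ε₀^2)*(ε₀^2*L) := by field_simp
        _ ≤ K*(ε₀^2*L) := mul_le_mul_of_nonneg_right hK480 (by positivity)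
        _ = ε₀^2*(K*L) := by ring
        _ ≤ ε₀^2*(P*Q^2*(n:ℝ)) := mul_le_mul_of_nonneg_left hKL (by positivity)
        _ ≤ ε₀^2*(P*Q*(n:ℝ)) := mul_le_mul_of_nonneg_left hq2 (by positivity)
    calc Real.exp (-(ε₀^2 * (P*Q*(n:ℝ)))/24) ≤ Real.exp (-(14*L)) :=
          Real.exp_le_exp.mpr (by linarith)
      _ = ((n:ℝ)^14)⁻¹ := hN14
  -- apply the main bound
  have hmono : pathProb (solTrans P Q) (α0 n) (D + M)
      (fun ω => ∃ k : ℕ, D + 1 ≤ k ∧ k ≤ D + M ∧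
        ε * (P * Q * (n:ℝ)) < |(((ω k) 0 : ℕ):ℝ) - P * Q * (n:ℝ)|)
      ≤ pathProb (solTrans P Q) (α0 n) (D + M)
      (fun ω => ∃ k : ℕ, D + 1 ≤ k ∧ k ≤ D + M ∧
        ε₀ * (P * Q * (n:ℝ)) < |(((ω k) 0 : ℕ):ℝ) - P * Q * (n:ℝ)|) := by
    refine pathProb_mono _ _ _ (fun ω hE => ?_)
    obtain ⟨k, h1, h2, h3⟩ := hE
    refine ⟨k, h1, h2, lt_of_le_of_lt ?_ h3⟩
    exact mul_le_mul_of_nonneg_right hε₀ε (by positivity)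
  have hmain := main_bound P Q ε₀ n D M (α0 n) hp0 hp1 hq0 hq1 hε₀0 hε₀2 ha hDle
  refine le_trans (le_trans hmono hmain) ?_
  -- convert the ENNReal bound to an ofReal bound
  have hexp0 : (0:ℝ) ≤ Real.exp (-(ε₀^2 * (P*Q*(n:ℝ)))/24) := (Real.exp_pos _).le
  have er1 : (1:ENNReal) - ENNReal.ofReal (1 - P*Q) = ENNReal.ofReal (P*Q) := by
    rw [← ENNReal.ofReal_one, ← ENNReal.ofReal_sub 1 h1pq0]
    congr 1
    ring
  have key : (M:ENNReal) * ((n:ENNReal) * ((ENNReal.ofReal (1-P*Q))^D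
        * (1-ENNReal.ofReal (1-P*Q))⁻¹)
        + (n:ENNReal) * (ENNReal.ofReal (1-P*Q))^D
        + 2 * ENNReal.ofReal (Real.exp (-(ε₀^2 * (P * Q * (n:ℝ))) / 24)))
      = ENNReal.ofReal ((M:ℝ) * ((n:ℝ) * ((1-P*Q)^D * (P*Q)⁻¹)
        + (n:ℝ) * (1-P*Q)^D
        + 2 * Real.exp (-(ε₀^2 * (P * Q * (n:ℝ))) / 24))) := by
    rw [ENNReal.ofReal_mul (Nat.cast_nonneg M)]
    rw [ENNReal.ofReal_add (by positivity) (by positivity)]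
    rw [ENNReal.ofReal_add (by positivity) (by positivity)]
    rw [ENNReal.ofReal_mul (Nat.cast_nonneg n)]
    rw [ENNReal.ofReal_mul (pow_nonneg h1pq0 D)]
    rw [ENNReal.ofReal_mul (Nat.cast_nonneg n)]
    rw [ENNReal.ofReal_mul (by norm_num : (0:ℝ) ≤ 2)]
    rw [ENNReal.ofReal_pow h1pq0]
    rw [ENNReal.ofReal_inv_of_pos hPQpos]
    rw [ENNReal.ofReal_natCast, ENNReal.ofReal_natCast, ENNReal.ofReal_ofNat]
    rw [er1]
  rw [key]
  refine ENNReal.ofReal_le_ofReal ?_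
  -- final real arithmetic
  have hxx : (0:ℝ) ≤ ((n:ℝ)^14)⁻¹ := by positivity
  have hinner : (n:ℝ) * ((1-P*Q)^D * (P*Q)⁻¹) + (n:ℝ) * (1-P*Q)^D
      + 2 * Real.exp (-(ε₀^2 * (P * Q * (n:ℝ))) / 24)
      ≤ ((n:ℝ)^14)⁻¹ * ((n:ℝ)^2 + (n:ℝ) + 2) := by
    have t1 : (1-P*Q)^D * (P*Q)⁻¹ ≤ ((n:ℝ)^14)⁻¹ * (n:ℝ) :=
      mul_le_mul hdecay hpq_invN (by positivity) hxx
    have t2 : (n:ℝ) * ((1-P*Q)^D * (P*Q)⁻¹) ≤ (n:ℝ) * (((n:ℝ)^14)⁻¹ * (n:ℝ)) :=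
      mul_le_mul_of_nonneg_left t1 hN0.le
    have t3 : (n:ℝ) * (1-P*Q)^D ≤ (n:ℝ) * ((n:ℝ)^14)⁻¹ :=
      mul_le_mul_of_nonneg_left hdecay hN0.le
    have t4 : 2 * Real.exp (-(ε₀^2 * (P * Q * (n:ℝ))) / 24) ≤ 2 * ((n:ℝ)^14)⁻¹ :=
      mul_le_mul_of_nonneg_left hcher (by norm_num)
    linarith [t2, t3, t4]
  have houter : (M:ℝ) * ((n:ℝ) * ((1-P*Q)^D * (P*Q)⁻¹) + (n:ℝ) * (1-P*Q)^D
      + 2 * Real.exp (-(ε₀^2 * (P * Q * (n:ℝ))) / 24))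
      ≤ (n:ℝ)^4 * (((n:ℝ)^14)⁻¹ * ((n:ℝ)^2 + (n:ℝ) + 2)) := by
    refine mul_le_mul hMub hinner ?_ (by positivity)
    have hA : (0:ℝ) ≤ (1-P*Q)^D := pow_nonneg h1pq0 D
    positivity
  have hsum3 : (n:ℝ)^2 + (n:ℝ) + 2 ≤ (n:ℝ)^3 := by
    have ha1 : 3*(n:ℝ)^2 ≤ (n:ℝ)^3 := by
      calc 3*(n:ℝ)^2 ≤ (n:ℝ)*(n:ℝ)^2 := mul_le_mul_of_nonneg_right hN3 (by positivity)
        _ = (n:ℝ)^3 := by ring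
    have ha2 : (n:ℝ) ≤ (n:ℝ)^2 := by
      calc (n:ℝ) = (n:ℝ)*1 := (mul_one _).symm
        _ ≤ (n:ℝ)*(n:ℝ) := mul_le_mul_of_nonneg_left hN1 hN0.le
        _ = (n:ℝ)^2 := (sq (n:ℝ)).symm
    have ha3 : (3:ℝ) ≤ (n:ℝ)^2 := by
      calc (3:ℝ) ≤ (n:ℝ) := hN3
        _ ≤ (n:ℝ)^2 := ha2
    linarith
  have hlast : (n:ℝ)^4 * (((n:ℝ)^14)⁻¹ * ((n:ℝ)^2 + (n:ℝ) + 2)) ≤ 1/(n:ℝ) := by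
    have h1 : (n:ℝ)^4 * (((n:ℝ)^14)⁻¹ * ((n:ℝ)^2 + (n:ℝ) + 2))
        ≤ (n:ℝ)^4 * (((n:ℝ)^14)⁻¹ * (n:ℝ)^3) := by
      refine mul_le_mul_of_nonneg_left (mul_le_mul_of_nonneg_left hsum3 hxx) (by positivity)
    have h2 : (n:ℝ)^4 * (((n:ℝ)^14)⁻¹ * (n:ℝ)^3) = (n:ℝ)^7 / (n:ℝ)^14 := by
      field_simp
    have h3 : (n:ℝ)^7 / (n:ℝ)^14 ≤ 1/(n:ℝ) := by
      rw [div_le_div_iff₀ (by positivity) hN0]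
      calc (n:ℝ)^7 * (n:ℝ) = (n:ℝ)^8 := by ring
        _ ≤ (n:ℝ)^14 := pow_le_pow_right₀ hN1 (by norm_num)
        _ = 1 * (n:ℝ)^14 := (one_mul _).symm
    linarith
  linarith
end
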